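/- arXiv:2202.13439 — 6 statements merged into one kernel-verified Lean document; each statement's English description precedes it below -/
import Mathlib

section
/- Let G and H be abelian Polish groups, M a Polishable subgroup of H, and ψ : G → H/M a group homomorphism into the quotient group. Suppose C ⊆ G is a dense G_δ subset and f : C → H is a Borel function such that f(x) + M = ψ(x) for every x ∈ C. Then f extends to a Borel function g : G → H such that g(x) + M = ψ(x) for every x ∈ G; in particular ψ admits a global Borel lift. -/
open Set Metric Filter
open scoped Classical Topology

lemma measurable_natFind {α : Type*} [MeasurableSpace α] {P : α → ℕ → Prop}
    [∀ y, Decidable (∃ n, P y n)] [∀ y, DecidablePred (P y)]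
    (h : ∀ n, MeasurableSet {y | P y n}) :
    Measurable fun y => if h' : ∃ n, P y n then Nat.find h' else 0 := by
  apply measurable_to_countable'
  intro j
  have heq : (fun y => if h' : ∃ n, P y n then Nat.find h' else 0) ⁻¹' {j} =
      (({y | P y j} ∩ ⋂ i, ⋂ (_ : i < j), {y | P y i}ᶜ) ∪
        ((⋂ n, {y | P y n}ᶜ) ∩ {y : α | 0 = j})) := by
    ext y
    by_cases h' : ∃ n, P y n
    · simp only [mem_preimage, mem_singleton_iff, dif_pos h', Nat.find_eq_iff h', mem_union,
        mem_inter_iff, mem_iInter, mem_setOf_eq, mem_compl_iff]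
      constructor
      · rintro ⟨h1, h2⟩; exact Or.inl ⟨h1, h2⟩
      · rintro (⟨h1, h2⟩ | ⟨h1, _⟩)
        · exact ⟨h1, h2⟩
        · exact absurd h' (by simpa using h1)
    · simp only [mem_preimage, mem_singleton_iff, dif_neg h', mem_union, mem_inter_iff,
        mem_iInter, mem_setOf_eq, mem_compl_iff]
      push_neg at h'
      constructor
      · intro hj; exact Or.inr ⟨h', hj⟩
      · rintro (⟨h1, _⟩ | ⟨_, h2⟩)
        · exact absurd h1 (h' j)
        · exact h2
  rw [heq]
  exact (((h j).inter (MeasurableSet.iInter fun i => MeasurableSet.iInter fun _ => (h i).compl)).union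
    ((MeasurableSet.iInter fun n => (h n).compl).inter (MeasurableSet.const _)))

lemma exists_measurable_section
    {G : Type*} [TopologicalSpace G] [AddCommGroup G] [IsTopologicalAddGroup G] [PolishSpace G]
    [MeasurableSpace G] [BorelSpace G] [Nonempty G]
    (C : Set G) (hCdense : Dense C) (hCGδ : IsGδ C) :
    ∃ z : G → G × G, Measurable z ∧
      ∀ x, (z x).1 ∈ C ∧ (z x).2 ∈ C ∧ (z x).1 - (z x).2 = x := by
  obtain ⟨U, hUo, hCU⟩ := hCGδ.eq_iInter_nat
  have hCsubU : ∀ n, C ⊆ U n := fun n => hCU ▸ iInter_subset U n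
  have hUd : ∀ n, Dense (U n) := fun n => hCdense.mono (hCsubU n)
  letI := TopologicalSpace.upgradeIsCompletelyMetrizable G
  obtain ⟨u, hu⟩ := TopologicalSpace.exists_dense_seq (G × G)
  set p : G × G → G := fun q => q.1 - q.2 with hp
  have hpc : Continuous p := continuous_fst.sub continuous_snd
  have hpo : IsOpenMap p := by
    intro O hO
    have himg : p '' O = ⋃ b : G, (· - b) '' {a | (a, b) ∈ O} := by
      ext x
      constructor
      · rintro ⟨⟨a, b⟩, hab, rfl⟩
        exact mem_iUnion.2 ⟨b, ⟨a, hab, rfl⟩⟩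
      · intro hx
        rcases mem_iUnion.1 hx with ⟨b, a, ha, rfl⟩
        exact ⟨(a, b), ha, rfl⟩
    rw [himg]
    exact isOpen_iUnion fun b => (isOpenMap_sub_right b) _
      (hO.preimage (continuous_id.prodMk continuous_const))
  -- the open dense sets V n
  set V : ℕ → Set G := fun n => ⋂ i ∈ Finset.range n, U i with hV
  have hVo : ∀ n, IsOpen (V n) := fun n => isOpen_biInter_finset fun i _ => hUo i
  have hVd : ∀ n, Dense (V n) := by
    intro n
    induction n with
    | zero => simp [hV, dense_univ]
    | succ n ih =>
        have hVeq : V (n + 1) = U n ∩ V n := by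
          simp only [hV]
          rw [Finset.range_add_one, Finset.set_biInter_insert]
        rw [hVeq]
        exact ((hUd n).inter_of_isOpen_left ih (hUo n))
  have hVC : ∀ x : G, (∀ n, x ∈ V (n + 1)) → x ∈ C := by
    intro x hx
    rw [hCU]
    refine mem_iInter.2 fun n => ?_
    have := hx n
    simp only [hV, mem_iInter, Finset.mem_range] at this
    exact this n (Nat.lt_succ_self n)
  set W : ℕ → Set (G × G) := fun n => (V n) ×ˢ (V n) with hW
  have hWo : ∀ n, IsOpen (W n) := fun n => (hVo n).prod (hVo n)
  -- radii
  set eps : ℕ → ℝ := fun m => (1 / 2 : ℝ) ^ m with heps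
  have hepspos : ∀ m, 0 < eps m := fun m => pow_pos (by norm_num) m
  have heps1 : ∀ m, eps m ≤ 1 := fun m => pow_le_one₀ (by norm_num) (by norm_num)
  -- balls
  set ctr : ℕ → G × G := fun s => u s.unpair.1 with hctr
  set rad : ℕ → ℝ := fun s => eps s.unpair.2 with hrad
  set B : ℕ → Set (G × G) := fun s => Metric.ball (ctr s) (rad s) with hB
  set cB : ℕ → Set (G × G) := fun s => Metric.closedBall (ctr s) (rad s) with hcB
  set P : G → ℕ → ℕ → ℕ → Prop :=
    fun y n s s' => y ∈ p '' B s' ∧ (cB s' ⊆ B s ∩ W (n + 1) ∧ rad s' ≤ eps (n + 1)) with hP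
  -- the key extension step
  have key : ∀ (y : G) (n : ℕ) (s : ℕ), y ∈ p '' B s → ∃ s', P y n s s' := by
    intro y n s hs
    obtain ⟨ab, habB, habp⟩ := hs
    -- a dense open set of candidates for the second coordinate
    have hDd : Dense (V (n+1) ∩ (fun w => y + w) ⁻¹' V (n+1)) :=
      (hVd (n+1)).inter_of_isOpen_left ((hVd (n+1)).preimage (isOpenMap_add_left y)) (hVo (n+1))
    have hNopen : IsOpen {w : G | (y + w, w) ∈ B s} :=
      Metric.isOpen_ball.preimage ((continuous_const.add continuous_id).prodMk continuous_id)
    have hNne : ab.2 ∈ {w : G | (y + w, w) ∈ B s} := by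
      have : (y + ab.2, ab.2) = ab := by
        have : y + ab.2 = ab.1 := by rw [← habp]; simp [hp]
        exact Prod.ext this rfl
      simpa [this] using habB
    obtain ⟨b', hb'D, hb'N⟩ := hDd.exists_mem_open hNopen ⟨ab.2, hNne⟩
    set a' : G := y + b' with ha'
    have hab' : (a', b') ∈ B s ∩ W (n + 1) := ⟨hb'N, ⟨hb'D.2, hb'D.1⟩⟩
    have hpa' : p (a', b') = y := by simp [hp, ha']
    have hOopen : IsOpen (B s ∩ W (n + 1)) := Metric.isOpen_ball.inter (hWo (n+1))
    obtain ⟨ρ, hρpos, hρ⟩ := Metric.isOpen_iff.1 hOopen _ hab'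
    obtain ⟨m', hm'⟩ : ∃ m', eps m' < min (ρ / 4) (eps (n + 1)) := by
      have hpos : 0 < min (ρ / 4) (eps (n + 1)) := lt_min (by linarith) (hepspos _)
      simpa [heps] using exists_pow_lt_of_lt_one hpos (by norm_num : (1/2 : ℝ) < 1)
    obtain ⟨j', hj'⟩ := hu.exists_dist_lt (a', b') (hepspos m')
    refine ⟨Nat.pair j' m', ?_, ?_, ?_⟩
    · refine ⟨(a', b'), ?_, hpa'⟩
      simp only [hB, hctr, hrad, Metric.mem_ball, Nat.unpair_pair]
      exact hj'
    · intro w hw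
      simp only [hcB, hctr, hrad, Metric.mem_closedBall, Nat.unpair_pair] at hw
      refine hρ ?_
      rw [Metric.mem_ball]
      have h1 : dist w (a', b') ≤ dist w (u j') + dist (u j') (a', b') := dist_triangle _ _ _
      have h2 : dist (u j') (a', b') = dist (a', b') (u j') := dist_comm _ _
      have h3 : eps m' ≤ ρ / 4 := (hm'.le.trans (min_le_left _ _))
      calc dist w (a', b') ≤ dist w (u j') + dist (u j') (a', b') := h1
        _ ≤ eps m' + eps m' := by rw [h2]; exact add_le_add hw hj'.le
        _ ≤ ρ / 4 + ρ / 4 := add_le_add h3 h3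
        _ < ρ := by linarith
    · simp only [hrad, Nat.unpair_pair]
      exact (hm'.le.trans (min_le_right _ _))
  have key0 : ∀ y : G, ∃ s, y ∈ p '' B s := by
    intro y
    obtain ⟨j, hj⟩ := hu.exists_dist_lt (y, 0) (hepspos 0)
    refine ⟨Nat.pair j 0, (y, 0), ?_, by simp [hp]⟩
    simp only [hB, hctr, hrad, Metric.mem_ball, Nat.unpair_pair]
    exact hj
  -- the recursive state
  set k : ℕ → G → ℕ := fun n => Nat.rec
    (fun y => if h : ∃ s, y ∈ p '' B s then Nat.find h else 0)
    (fun n kn y => if h : ∃ s', P y n (kn y) s' then Nat.find h else 0) n with hk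
  have hk0 : ∀ y, k 0 y = if h : ∃ s, y ∈ p '' B s then Nat.find h else 0 := fun _ => rfl
  have hksucc : ∀ n y, k (n + 1) y =
      if h : ∃ s', P y n (k n y) s' then Nat.find h else 0 := fun _ _ => rfl
  have inv : ∀ n y, y ∈ p '' B (k n y) := by
    intro n
    induction n with
    | zero =>
        intro y
        have h := key0 y
        rw [hk0, dif_pos h]
        exact Nat.find_spec h
    | succ n ih =>
        intro y
        have h := key y n (k n y) (ih y)
        rw [hksucc, dif_pos h]
        exact (Nat.find_spec h).1
  have step : ∀ n y, cB (k (n + 1) y) ⊆ B (k n y) ∩ W (n + 1) ∧ rad (k (n + 1) y) ≤ eps (n + 1) := by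
    intro n y
    have h := key y n (k n y) (inv n y)
    rw [hksucc, dif_pos h]
    exact (Nat.find_spec h).2
  have hradle : ∀ n y, rad (k n y) ≤ eps n := by
    intro n y
    cases n with
    | zero => exact (heps1 _).trans_eq (by simp [heps])
    | succ n => exact (step n y).2
  -- measurability of the states
  have hkm : ∀ n, Measurable (k n) := by
    intro n
    induction n with
    | zero =>
        refine measurable_natFind fun s => ?_
        exact (hpo _ Metric.isOpen_ball).measurableSet
    | succ n ih =>
        have : (fun y => k (n+1) y) = fun y =>
            if h : ∃ s', P y n (k n y) s' then Nat.find h else 0 := funext (hksucc n)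
        rw [show k (n+1) = fun y => k (n+1) y from rfl, this]
        refine measurable_natFind fun s' => ?_
        have : {y | P y n (k n y) s'} = (p '' B s') ∩
            ((k n) ⁻¹' {t | cB s' ⊆ B t ∩ W (n + 1) ∧ rad s' ≤ eps (n + 1)}) := by
          ext y; simp only [hP, mem_setOf_eq, mem_inter_iff, mem_preimage]
        rw [this]
        exact ((hpo _ Metric.isOpen_ball).measurableSet).inter (ih trivial)
  -- the centers converge
  have hcauchy : ∀ y, CauchySeq (fun n => ctr (k n y)) := by
    intro y
    refine cauchySeq_of_le_geometric (1/2 : ℝ) 1 (by norm_num) (fun n => ?_)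
    have h1 : ctr (k (n+1) y) ∈ cB (k (n+1) y) := Metric.mem_closedBall_self (hepspos _).le
    have h2 := ((step n y).1 h1).1
    rw [Metric.mem_ball] at h2
    rw [dist_comm]
    calc dist (ctr (k (n+1) y)) (ctr (k n y)) ≤ rad (k n y) := h2.le
      _ ≤ eps n := hradle n y
      _ = 1 * (1/2)^n := by simp [heps]
  have hconv : ∀ y, ∃ l, Tendsto (fun n => ctr (k n y)) atTop (𝓝 l) :=
    fun y => cauchySeq_tendsto_of_complete (hcauchy y)
  choose z hz using hconv
  have hzm : Measurable z := by
    refine measurable_of_tendsto_metrizable (fun n => ?_) (tendsto_pi_nhds.2 hz)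
    exact Measurable.comp (g := ctr) (f := k n) measurable_from_top (hkm n)
  refine ⟨z, hzm, fun x => ?_⟩
  -- membership of limit in the closed balls
  have hnest : ∀ n, cB (k (n + 1) x) ⊆ cB (k n x) :=
    fun n => ((step n x).1.trans inter_subset_left).trans Metric.ball_subset_closedBall
  have hnest' : ∀ m n, n ≤ m → cB (k m x) ⊆ cB (k n x) := by
    intro m n h
    induction h with
    | refl => exact subset_rfl
    | step h ih => exact (hnest _).trans ih
  have hmemcB : ∀ n, z x ∈ cB (k (n + 1) x) := by
    intro n
    refine (Metric.isClosed_closedBall).mem_of_tendsto (hz x) ?_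
    refine eventually_atTop.2 ⟨n + 1, fun m hm => ?_⟩
    exact hnest' m (n+1) hm (Metric.mem_closedBall_self (hepspos _).le)
  have hmemW : ∀ n, z x ∈ W (n + 1) := fun n => ((step n x).1 (hmemcB n)).2
  have hz1C : (z x).1 ∈ C := hVC _ fun n => ((hmemW n).1)
  have hz2C : (z x).2 ∈ C := hVC _ fun n => ((hmemW n).2)
  refine ⟨hz1C, hz2C, ?_⟩
  -- p (z x) = x
  have hxs : ∀ n, ∃ q : G × G, q ∈ B (k n x) ∧ p q = x := by
    intro n
    obtain ⟨q, hq1, hq2⟩ := inv n x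
    exact ⟨q, hq1, hq2⟩
  choose xs hxs1 hxs2 using hxs
  have hxz : Tendsto xs atTop (𝓝 (z x)) := by
    rw [tendsto_iff_dist_tendsto_zero]
    have hb : ∀ n, dist (xs n) (z x) ≤ eps n + dist (ctr (k n x)) (z x) := by
      intro n
      calc dist (xs n) (z x) ≤ dist (xs n) (ctr (k n x)) + dist (ctr (k n x)) (z x) :=
            dist_triangle _ _ _
        _ ≤ eps n + dist (ctr (k n x)) (z x) := by
            have := hxs1 n
            rw [hB, Metric.mem_ball] at this
            exact add_le_add_left (this.le.trans (hradle n x)) _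
    have hlim : Tendsto (fun n => eps n + dist (ctr (k n x)) (z x)) atTop (𝓝 0) := by
      have h1 : Tendsto eps atTop (𝓝 0) := by
        simpa [heps] using tendsto_pow_atTop_nhds_zero_of_lt_one
          (by norm_num : (0:ℝ) ≤ 1/2) (by norm_num : (1/2:ℝ) < 1)
      have h2 : Tendsto (fun n => dist (ctr (k n x)) (z x)) atTop (𝓝 0) :=
        tendsto_iff_dist_tendsto_zero.1 (hz x)
      simpa using h1.add h2
    exact squeeze_zero (fun n => dist_nonneg) hb hlim
  have : Tendsto (fun n => p (xs n)) atTop (𝓝 (p (z x))) := (hpc.tendsto _).comp hxz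
  have hconst : Tendsto (fun n => p (xs n)) atTop (𝓝 x) := by
    simp only [hxs2]; exact tendsto_const_nhds
  exact tendsto_nhds_unique this hconst

/-- A subgroup `N` of an abelian Polish group `G` is *Polishable* if it carries a Polish group
topology whose open sets are Borel in `G`. -/
def IsPolishableSubgroup {G : Type*} [TopologicalSpace G] [MeasurableSpace G]
    [AddCommGroup G] (N : AddSubgroup G) : Prop :=
  ∃ τ : TopologicalSpace N, @PolishSpace N τ ∧ @IsTopologicalAddGroup N τ _ ∧
    ∀ U : Set N, τ.IsOpen U → MeasurableSet (Subtype.val '' U)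

/-- A partial Borel lift of a homomorphism into a quotient by a Polishable subgroup, defined on a
dense `Gδ` set, extends to a global Borel lift. -/
theorem statement0
    {G H : Type*}
    [TopologicalSpace G] [AddCommGroup G] [IsTopologicalAddGroup G] [PolishSpace G]
    [MeasurableSpace G] [BorelSpace G]
    [TopologicalSpace H] [AddCommGroup H] [IsTopologicalAddGroup H] [PolishSpace H]
    [MeasurableSpace H] [BorelSpace H]
    (M : AddSubgroup H) (hM : IsPolishableSubgroup M)
    (ψ : G →+ H ⧸ M)
    (C : Set G) (hCdense : Dense C) (hCGδ : IsGδ C)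
    (f : C → H) (hf : Measurable f)
    (hlift : ∀ x : C, (QuotientAddGroup.mk (f x) : H ⧸ M) = ψ x) :
    ∃ g : G → H, Measurable g ∧ (∀ x : C, g x = f x) ∧
      ∀ x : G, (QuotientAddGroup.mk (g x) : H ⧸ M) = ψ x := by
  rcases isEmpty_or_nonempty G with hG | hG
  · exact ⟨fun _ => 0, measurable_const, fun x => (IsEmpty.false (x : G)).elim,
      fun x => (IsEmpty.false x).elim⟩
  obtain ⟨z, hzm, hz⟩ := exists_measurable_section C hCdense hCGδ
  have hCm : MeasurableSet C := hCGδ.measurableSet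
  set z1 : G → C := fun x => ⟨(z x).1, (hz x).1⟩ with hz1
  set z2 : G → C := fun x => ⟨(z x).2, (hz x).2.1⟩ with hz2
  have hz1m : Measurable z1 := (hzm.fst).subtype_mk
  have hz2m : Measurable z2 := (hzm.snd).subtype_mk
  refine ⟨fun x => if h : x ∈ C then f ⟨x, h⟩ else f (z1 x) - f (z2 x), ?_, ?_, ?_⟩
  · exact Measurable.dite hf
      ((hf.comp (hz1m.comp measurable_subtype_coe)).sub
        (hf.comp (hz2m.comp measurable_subtype_coe))) hCm
  · intro x
    simp only [dif_pos x.2]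
  · intro x
    by_cases h : x ∈ C
    · simp only [dif_pos h]
      exact hlift ⟨x, h⟩
    · simp only [dif_neg h]
      have h1 := hlift (z1 x)
      have h2 := hlift (z2 x)
      calc (QuotientAddGroup.mk (f (z1 x) - f (z2 x)) : H ⧸ M)
          = QuotientAddGroup.mk (f (z1 x)) - QuotientAddGroup.mk (f (z2 x)) := by
            rw [QuotientAddGroup.mk_sub]
        _ = ψ (z x).1 - ψ (z x).2 := by rw [h1, h2]
        _ = ψ ((z x).1 - (z x).2) := (map_sub ψ _ _).symm
        _ = ψ x := by rw [(hz x).2.2]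
end

section
/- Let G be an abelian Polish group and let (Gₙ)_{n∈ω} be a sequence of Polishable subgroups of G. Then the intersection ⋂_{n∈ω} Gₙ is a Polishable subgroup of G. -/
open Set Function Topology Filter Pointwise

section Pettis

variable {H : Type*} [TopologicalSpace H] [AddCommGroup H] [IsTopologicalAddGroup H]
  [BaireSpace H]

/-- Pettis' theorem: in a Baire topological group, if `A` is Baire measurable and non-meager,
then `A - A` is a neighborhood of `0`. -/
theorem pettis_sub_mem_nhds {A : Set H} (hA : BaireMeasurableSet A) (hnm : ¬ IsMeagre A) :
    A - A ∈ nhds (0 : H) := by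
  obtain ⟨U, hUopen, hAU⟩ := hA.residualEq_isOpen
  set M : Set H := {x | ¬ ((x ∈ A) ↔ (x ∈ U))} with hMdef
  have hM : IsMeagre M := by
    refine Filter.mem_of_superset hAU ?_
    intro x hx
    simp only [M, mem_compl_iff, mem_setOf_eq, not_not]
    exact iff_of_eq hx
  have hUne : U.Nonempty := by
    rcases eq_empty_or_nonempty U with h | h
    · exfalso
      apply hnm
      apply hM.mono
      intro x hx
      simp [M, hx, h]
    · exact h
  have key : U - U ⊆ A - A := by
    rintro g ⟨u₁, hu₁, u₂, hu₂, rfl⟩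
    set T : Set H := U ∩ (fun x => x - (u₁ - u₂)) ⁻¹' U with hTdef
    have hTopen : IsOpen T := hUopen.inter ((continuous_sub_right _).isOpen_preimage _ hUopen)
    have hTne : T.Nonempty := ⟨u₁, hu₁, by simpa using hu₂⟩
    have hM' : IsMeagre (M ∪ (fun x => x - (u₁ - u₂)) ⁻¹' M) := by
      rw [IsMeagre, Set.compl_union]
      exact Filter.inter_mem hM
        (hM.preimage_of_isOpenMap (continuous_sub_right _)
          (Homeomorph.subRight (u₁ - u₂)).isOpenMap)
    have hns : ¬ T ⊆ (M ∪ (fun x => x - (u₁ - u₂)) ⁻¹' M) := by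
      intro hsub
      have hTm : IsMeagre T := hM'.mono hsub
      have hdense : Dense Tᶜ := dense_of_mem_residual hTm
      obtain ⟨x, hx1, hx2⟩ := hdense.inter_open_nonempty T hTopen hTne
      exact hx2 hx1
    obtain ⟨x, hxT, hxM⟩ := Set.not_subset.mp hns
    rw [Set.mem_union] at hxM
    push_neg at hxM
    obtain ⟨hxM1, hxM2⟩ := hxM
    have hxA : x ∈ A := by
      by_contra h
      exact hxM1 (by simp [M, h, hxT.1])
    have hxU2 : x - (u₁ - u₂) ∈ U := hxT.2
    have hxA' : x - (u₁ - u₂) ∈ A := by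
      by_contra h
      exact hxM2 (by simp [M, h, hxU2])
    exact ⟨x, hxA, x - (u₁ - u₂), hxA', sub_sub_cancel x (u₁ - u₂)⟩
  have hsub : IsOpen (U - U) := hUopen.sub_left
  have h0 : (0 : H) ∈ U - U := by
    obtain ⟨u, hu⟩ := hUne
    exact ⟨u, hu, u, hu, sub_self u⟩
  exact Filter.mem_of_superset (hsub.mem_nhds h0) key

end Pettis

section MeasurableHomContinuous

/-- A Borel measurable homomorphism from a Baire topological group (e.g. a Polish group)
to a separable topological group is continuous. -/
theorem continuous_of_measurable_addHom' {H G : Type*}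
    [TopologicalSpace H] [AddCommGroup H] [IsTopologicalAddGroup H] [BaireSpace H] [Nonempty H]
    [MeasurableSpace H] [BorelSpace H]
    [TopologicalSpace G] [AddCommGroup G] [IsTopologicalAddGroup G]
    [MeasurableSpace G] [OpensMeasurableSpace G] [TopologicalSpace.SeparableSpace G]
    (f : H →+ G) (hf : Measurable f) : Continuous f := by
  apply continuous_of_continuousAt_zero f
  rw [ContinuousAt, map_zero]
  intro W hW
  rw [Filter.mem_map]
  -- find open V ∋ 0 with V - V ⊆ W
  have hsubt : Filter.Tendsto (fun p : G × G => p.1 - p.2) (nhds ((0 : G), (0 : G))) (nhds 0) := by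
    have h1 : Continuous (fun p : G × G => p.1 - p.2) := continuous_sub
    simpa using h1.tendsto ((0 : G), (0 : G))
  have hWp : (fun p : G × G => p.1 - p.2) ⁻¹' W ∈ nhds ((0 : G), (0 : G)) := hsubt hW
  rw [nhds_prod_eq, Filter.mem_prod_iff] at hWp
  obtain ⟨V₁, hV₁, V₂, hV₂, hV⟩ := hWp
  set V : Set G := interior V₁ ∩ interior V₂ with hVdef
  have hVopen : IsOpen V := isOpen_interior.inter isOpen_interior
  have hV0 : (0 : G) ∈ V := ⟨mem_interior_iff_mem_nhds.mpr hV₁, mem_interior_iff_mem_nhds.mpr hV₂⟩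
  have hVW : ∀ a b : G, a ∈ V → b ∈ V → a - b ∈ W := by
    intro a b ha hb
    have hab : (a, b) ∈ V₁ ×ˢ V₂ :=
      Set.mk_mem_prod (interior_subset ha.1) (interior_subset hb.2)
    exact hV hab
  -- dense sequence
  obtain ⟨u, hu⟩ := TopologicalSpace.exists_dense_seq G
  have hcover : ∀ x : G, ∃ n, x - u n ∈ V := by
    intro x
    set e : G ≃ₜ G := (Homeomorph.neg G).trans (Homeomorph.addLeft x) with hedef
    have he : ∀ v : G, e v = x - v := fun v => (sub_eq_add_neg x v).symm
    have hOopen : IsOpen (e '' V) := e.isOpenMap V hVopen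
    have hOne : (e '' V).Nonempty := ⟨e 0, mem_image_of_mem _ hV0⟩
    obtain ⟨n, hn⟩ := hu.exists_mem_open hOopen hOne
    obtain ⟨v, hv, hev⟩ := hn
    refine ⟨n, ?_⟩
    have hxv : u n = x - v := by rw [← hev, he]
    rw [hxv]
    simpa [sub_sub_cancel] using hv
  set A : ℕ → Set H := fun n => f ⁻¹' {y | y - u n ∈ V} with hAdef
  have hAmeas : ∀ n, MeasurableSet (A n) := fun n =>
    hf (((continuous_sub_right (u n)).isOpen_preimage _ hVopen).measurableSet)
  have hunion : (⋃ n, A n) = Set.univ := by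
    ext h
    simp only [Set.mem_iUnion, Set.mem_univ, iff_true]
    obtain ⟨n, hn⟩ := hcover (f h)
    exact ⟨n, hn⟩
  have hex : ∃ n, ¬ IsMeagre (A n) := by
    by_contra hall
    push_neg at hall
    have : IsMeagre (⋃ n, A n) := isMeagre_iUnion hall
    rw [hunion] at this
    have : Dense ((Set.univ : Set H)ᶜ) := dense_of_mem_residual this
    obtain ⟨x, hx⟩ := this.nonempty
    simp at hx
  obtain ⟨n, hn⟩ := hex
  have hpettis : A n - A n ∈ nhds (0 : H) :=
    pettis_sub_mem_nhds ((hAmeas n).baireMeasurableSet) hn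
  refine Filter.mem_of_superset hpettis ?_
  rintro x ⟨a, ha, b, hb, rfl⟩
  have : f (a - b) = (f a - u n) - (f b - u n) := by
    rw [map_sub]; abel
  simp only [Set.mem_preimage, this]
  exact hVW _ _ ha hb

end MeasurableHomContinuous

section LusinSouslin

/-- If `v : N → G` is injective from a Polish space into a standard Borel space, and images of
open sets are measurable, then images of all Borel sets are measurable and `v` is measurable. -/
theorem polishable_val_measurable {G : Type*} [MeasurableSpace G] [StandardBorelSpace G]
    {N : Type*} [TopologicalSpace N] [PolishSpace N] [MeasurableSpace N] [BorelSpace N]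
    {v : N → G} (hinj : Function.Injective v)
    (hopen : ∀ U : Set N, IsOpen U → MeasurableSet (v '' U)) :
    Measurable v ∧ ∀ B : Set N, MeasurableSet B → MeasurableSet (v '' B) := by
  have himg : ∀ B : Set N, MeasurableSet B → MeasurableSet (v '' B) := by
    intro B hB
    refine hB.induction_on_open (C := fun s _ => MeasurableSet (v '' s)) hopen ?_ ?_
    · intro s _ hCs
      rw [Set.compl_eq_univ_diff, Set.image_diff hinj]
      exact (hopen Set.univ isOpen_univ).diff hCs
    · intro g _ _ hC
      rw [Set.image_iUnion]; exact MeasurableSet.iUnion hC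
  refine ⟨?_, himg⟩
  have hS : MeasurableSet (Set.range v) := by
    rw [← Set.image_univ]; exact hopen _ isOpen_univ
  haveI := hS.standardBorel
  set r : Set.range v → N := Set.rangeSplitting v with hr
  have hvr : ∀ x : Set.range v, v (r x) = x := Set.apply_rangeSplitting v
  have hrmeas : Measurable r := by
    intro B hB
    have heq : r ⁻¹' B = Subtype.val ⁻¹' (v '' B) := by
      ext x
      constructor
      · intro hx; exact ⟨r x, hx, hvr x⟩
      · rintro ⟨b, hb, hbx⟩
        have hrb : r x = b := hinj (by rw [hvr x, hbx])
        rw [Set.mem_preimage, hrb]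
        exact hb
    rw [heq]
    exact measurable_subtype_coe (himg B hB)
  have hrinj : Function.Injective r := Set.rangeSplitting_injective v
  have hemb : MeasurableEmbedding r := hrmeas.measurableEmbedding hrinj
  have he : Measurable (Set.rangeFactorization v) := by
    intro B hB
    have heq : Set.rangeFactorization v ⁻¹' B = r '' B := by
      ext x
      simp only [Set.mem_preimage]
      constructor
      · intro hx
        refine ⟨Set.rangeFactorization v x, hx, ?_⟩
        apply hinj
        rw [hvr]
        rfl
      · rintro ⟨b, hb, rfl⟩
        have hfb : Set.rangeFactorization v (r b) = b := by
          apply Subtype.ext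
          rw [Set.rangeFactorization_coe]
          exact hvr b
        rwa [hfb]
    rw [heq]
    exact hemb.measurableSet_image.mpr hB
  exact measurable_subtype_coe.comp he

end LusinSouslin

section Aux

/-- A map with closed range induces a Polish topology. -/
theorem induced_polish {X Y : Type*} [tY : TopologicalSpace Y] [PolishSpace Y] (f : X → Y)
    (hinj : Function.Injective f) (hclosed : IsClosed (Set.range f)) :
    @PolishSpace X (TopologicalSpace.induced f tY) := by
  letI : TopologicalSpace X := TopologicalSpace.induced f tY
  have hemb : Topology.IsClosedEmbedding f := ⟨⟨⟨rfl⟩, hinj⟩, hclosed⟩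
  exact hemb.polishSpace

/-- Abstract version: if each `Gs n` is the range of an injective homomorphism from an abstract
Polish group `H n` mapping open sets to Borel sets, then `⨅ n, Gs n` is Polishable. -/
theorem aux_iInf_polishable {G : Type*}
    [TopologicalSpace G] [AddCommGroup G] [IsTopologicalAddGroup G] [PolishSpace G]
    [MeasurableSpace G] [BorelSpace G]
    {H : ℕ → Type*} [∀ n, TopologicalSpace (H n)] [∀ n, AddCommGroup (H n)]
    [∀ n, IsTopologicalAddGroup (H n)] [∀ n, PolishSpace (H n)]
    (v : ∀ n, H n →+ G) (hinj : ∀ n, Function.Injective (v n))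
    (hM : ∀ n (U : Set (H n)), IsOpen U → MeasurableSet (v n '' U))
    (Gs : ℕ → AddSubgroup G) (hrange : ∀ n, (Gs n : Set G) = Set.range (v n)) :
    IsPolishableSubgroup (⨅ n, Gs n) := by
  classical
  letI : ∀ n, MeasurableSpace (H n) := fun n => borel (H n)
  haveI : ∀ n, BorelSpace (H n) := fun n => ⟨rfl⟩
  -- each v n is measurable, Borel images are measurable, and v n is continuous
  have hmeas : ∀ n, Measurable (v n) ∧
      ∀ B : Set (H n), MeasurableSet B → MeasurableSet (v n '' B) :=
    fun n => polishable_val_measurable (hinj n) (hM n)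
  have hcont : ∀ n, Continuous (v n) := by
    intro n
    letI := TopologicalSpace.upgradeIsCompletelyMetrizable (H n)
    haveI : Nonempty (H n) := ⟨0⟩
    exact continuous_of_measurable_addHom' (v n) (hmeas n).1
  -- the diagonal embedding
  haveI : Nonempty (∀ n, H n) := ⟨fun _ => 0⟩
  have hmemrange : ∀ (n) (x : ↥(⨅ n, Gs n)), (x : G) ∈ Set.range (v n) := by
    intro n x
    rw [← hrange n]
    exact AddSubgroup.mem_iInf.mp x.2 n
  have hviF : ∀ (n) (x : ↥(⨅ n, Gs n)), v n (Function.invFun (v n) (x : G)) = (x : G) :=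
    fun n x => Function.invFun_eq (hmemrange n x)
  set Φ : ↥(⨅ n, Gs n) →+ (∀ n, H n) :=
    { toFun := fun x n => Function.invFun (v n) (x : G)
      map_zero' := by
        funext n
        apply hinj n
        rw [hviF n 0]
        simp
      map_add' := by
        intro x y
        funext n
        apply hinj n
        rw [Pi.add_apply, map_add, hviF n (x + y), hviF n x, hviF n y]
        rfl } with hΦdef
  have hΦval : ∀ (x : ↥(⨅ n, Gs n)) (n : ℕ), v n (Φ x n) = (x : G) := fun x n => hviF n x
  have hΦinj : Function.Injective Φ := by
    intro x y hxy
    apply Subtype.ext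
    rw [← hΦval x 0, ← hΦval y 0, hxy]
  -- the topology
  refine ⟨TopologicalSpace.induced Φ inferInstance, ?_, ?_, ?_⟩
  · -- Polish
    have hclosed : IsClosed (Set.range Φ) := by
      have : Set.range Φ = ⋂ n, {y : ∀ n, H n | v n (y n) = v 0 (y 0)} := by
        ext y
        simp only [Set.mem_range, Set.mem_iInter, Set.mem_setOf_eq]
        constructor
        · rintro ⟨x, rfl⟩ n
          rw [hΦval x n, hΦval x 0]
        · intro hy
          have hgmem : v 0 (y 0) ∈ ⨅ n, Gs n := by
            rw [AddSubgroup.mem_iInf]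
            intro n
            rw [← hy n]
            have : v n (y n) ∈ Set.range (v n) := Set.mem_range_self _
            rw [← hrange n] at this
            exact this
          refine ⟨⟨v 0 (y 0), hgmem⟩, ?_⟩
          funext n
          apply hinj n
          rw [hΦval ⟨v 0 (y 0), hgmem⟩ n]
          exact (hy n).symm
      rw [this]
      exact isClosed_iInter fun n =>
        isClosed_eq ((hcont n).comp (continuous_apply n)) ((hcont 0).comp (continuous_apply 0))
    exact induced_polish Φ hΦinj hclosed
  · -- topological group
    exact topologicalAddGroup_induced Φ
  · -- open sets are Borel in G
    intro U hU
    obtain ⟨V, hV, rfl⟩ := isOpen_induced_iff.mp hU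
    -- the Borel structure of the product
    have hVmeas : MeasurableSet V := hV.measurableSet
    set S : Set G := ⋂ n, (Gs n : Set G) with hSdef
    have hSmeas : MeasurableSet S := by
      refine MeasurableSet.iInter fun n => ?_
      rw [hrange n, ← Set.image_univ]
      exact hM n _ isOpen_univ
    have hSmem : ∀ g : S, ∀ n, (g : G) ∈ Set.range (v n) := by
      intro g n
      rw [← hrange n]
      exact Set.mem_iInter.mp g.2 n
    set ψ : S → ∀ n, H n := fun g n => Function.invFun (v n) (g : G) with hψdef
    have hψval : ∀ (g : S) (n : ℕ), v n (ψ g n) = (g : G) :=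
      fun g n => Function.invFun_eq (hSmem g n)
    have hψmeas : Measurable ψ := by
      apply measurable_pi_lambda
      intro n
      intro B hB
      have heq : (fun g : S => ψ g n) ⁻¹' B = Subtype.val ⁻¹' (v n '' B) := by
        ext g
        simp only [Set.mem_preimage]
        constructor
        · intro hg
          exact ⟨ψ g n, hg, hψval g n⟩
        · rintro ⟨b, hb, hbg⟩
          have : ψ g n = b := hinj n (by rw [hψval g n, hbg])
          rwa [this]
      rw [heq]
      exact measurable_subtype_coe ((hmeas n).2 B hB)
    have himage : Subtype.val '' (Φ ⁻¹' V) = Subtype.val '' (ψ ⁻¹' V) := by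
      ext g
      simp only [Set.mem_image, Set.mem_preimage]
      constructor
      · rintro ⟨x, hx, rfl⟩
        have hgS : (x : G) ∈ S := Set.mem_iInter.mpr fun n => AddSubgroup.mem_iInf.mp x.2 n
        refine ⟨⟨(x : G), hgS⟩, ?_, rfl⟩
        have : ψ ⟨(x : G), hgS⟩ = Φ x := rfl
        rwa [this]
      · rintro ⟨g, hg, rfl⟩
        have hgmem : (g : G) ∈ ⨅ n, Gs n :=
          AddSubgroup.mem_iInf.mpr fun n => Set.mem_iInter.mp g.2 n
        refine ⟨⟨(g : G), hgmem⟩, ?_, rfl⟩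
        have : Φ ⟨(g : G), hgmem⟩ = ψ g := rfl
        rwa [this]
    rw [himage]
    exact hSmeas.subtype_image (hψmeas hVmeas)

end Aux

/-- The intersection of a sequence of Polishable subgroups of an abelian Polish group is
Polishable. -/
theorem statement2
    {G : Type*}
    [TopologicalSpace G] [AddCommGroup G] [IsTopologicalAddGroup G] [PolishSpace G]
    [MeasurableSpace G] [BorelSpace G]
    (Gs : ℕ → AddSubgroup G) (hGs : ∀ n, IsPolishableSubgroup (Gs n)) :
    IsPolishableSubgroup (⨅ n, Gs n) := by
  choose τ hP hT hM using hGs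
  exact @aux_iInf_polishable G _ _ _ _ _ _ (fun n => ↥(Gs n)) τ _ hT hP
    (fun n => (Gs n).subtype) (fun n => Subtype.val_injective)
    (fun n U hU => hM n U hU)
    Gs (fun n => (Subtype.range_coe).symm)
end

section
/- Let G be a non-Archimedean abelian Polish group, Ĥ an abelian Polish group, M a non-Archimedean Polishable subgroup of Ĥ, and f : G → Ĥ a continuous function such that f(x+y) − f(x) − f(y) ∈ M for all x, y ∈ G. Let M₁ be an open subgroup of M (with respect to the Polish group topology of M) such that M₁ equals the intersection of M with the closure of M₁ in Ĥ. Then there exist x₁, y₁ ∈ G and an open subgroup G₁ of G such that the function g : G → Ĥ defined by g(z) := f(x₁ + y₁ + z) − f(x₁ + y₁) satisfies g(x+y) − g(x) − g(y) ∈ M₁ for all x, y ∈ G₁. -/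
open Set Filter Topology TopologicalSpace

/-- If `t` is open and dense in `X × Y` with `Y` second countable, then residually many
vertical sections of `t` are dense. -/
lemma aux_dense_sections {X Y : Type*} [TopologicalSpace X] [TopologicalSpace Y]
    [SecondCountableTopology Y] {t : Set (X × Y)} (ht : IsOpen t) (hd : Dense t) :
    {x : X | Dense {y : Y | (x, y) ∈ t}} ∈ residual X := by
  obtain ⟨B, hBc, hBne, hB⟩ := exists_countable_basis Y
  have key : (⋂ o ∈ B, {x : X | ∃ y ∈ o, (x, y) ∈ t}) ∈ residual X := by
    refine (countable_bInter_mem hBc).mpr fun o ho => ?_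
    have hone : o.Nonempty := nonempty_iff_ne_empty.mpr (by rintro rfl; exact hBne ho)
    have hoo : IsOpen o := hB.isOpen ho
    have heq : {x : X | ∃ y ∈ o, (x, y) ∈ t} = Prod.fst '' (t ∩ (univ ×ˢ o)) := by
      ext x
      simp only [mem_setOf_eq, mem_image, mem_inter_iff, mem_prod, mem_univ, true_and, Prod.exists]
      exact ⟨fun ⟨y, hy, hxy⟩ => ⟨x, y, ⟨hxy, hy⟩, rfl⟩,
        fun ⟨a, b, ⟨hab, hb⟩, h⟩ => h ▸ ⟨b, hb, hab⟩⟩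
    refine residual_of_dense_open ?_ ?_
    · rw [heq]
      exact isOpenMap_fst _ (ht.inter (isOpen_univ.prod hoo))
    · rw [dense_iff_inter_open]
      rintro U hU ⟨x0, hx0⟩
      obtain ⟨⟨a, b⟩, ⟨haU, hbo⟩, habt⟩ := hd.inter_open_nonempty (U ×ˢ o)
        (hU.prod hoo) ⟨⟨x0, hone.choose⟩, hx0, hone.choose_spec⟩
      exact ⟨a, haU, b, hbo, habt⟩
  refine mem_of_superset key fun x hx => ?_
  rw [mem_setOf_eq, hB.dense_iff]
  intro o ho hone
  simp only [mem_iInter] at hx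
  obtain ⟨y, hyo, hyt⟩ := hx o ho
  exact ⟨y, hyo, hyt⟩

/-- Easy direction of the Kuratowski–Ulam theorem: if `S` is meager in `X × Y`, then
residually many vertical sections of `S` are meager. -/
lemma aux_ku {X Y : Type*} [TopologicalSpace X] [TopologicalSpace Y]
    [SecondCountableTopology Y] {S : Set (X × Y)} (hS : IsMeagre S) :
    {x : X | IsMeagre {y : Y | (x, y) ∈ S}} ∈ residual X := by
  obtain ⟨F, hFo, hFd, hFc, hFs⟩ := mem_residual_iff.mp hS
  have key : (⋂ t ∈ F, {x : X | Dense {y : Y | (x, y) ∈ t}}) ∈ residual X :=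
    (countable_bInter_mem hFc).mpr fun t ht => aux_dense_sections (hFo t ht) (hFd t ht)
  refine mem_of_superset key fun x hx => ?_
  simp only [mem_iInter] at hx
  have : (⋂ t ∈ F, {y : Y | (x, y) ∈ t}) ∈ residual Y :=
    (countable_bInter_mem hFc).mpr fun t ht =>
      residual_of_dense_open ((hFo t ht).preimage (Continuous.prodMk_right x)) (hx t ht)
  refine mem_of_superset this fun y hy => ?_
  simp only [mem_iInter] at hy
  exact hFs (by simpa [mem_sInter] using fun t ht => hy t ht)

/-- One-step improvement of a continuous lift of a homomorphism into a quotient by a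
non-Archimedean Polishable subgroup (Lemma 7.1 of the paper). -/
theorem statement7
    {G H : Type*}
    [TopologicalSpace G] [AddCommGroup G] [IsTopologicalAddGroup G] [PolishSpace G]
    -- `G` is non-Archimedean:
    (hGna : ∀ U ∈ nhds (0 : G), ∃ S : AddSubgroup G, IsOpen (S : Set G) ∧ (S : Set G) ⊆ U)
    [TopologicalSpace H] [AddCommGroup H] [IsTopologicalAddGroup H] [PolishSpace H]
    [MeasurableSpace H] [BorelSpace H]
    -- `M` is a non-Archimedean Polishable subgroup of `H`, with Polish group topology `τ`:
    (M : AddSubgroup H) (τ : TopologicalSpace M)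
    (hPol : @PolishSpace M τ) (hTG : @IsTopologicalAddGroup M τ _)
    (hBorel : ∀ U : Set M, τ.IsOpen U → MeasurableSet (Subtype.val '' U))
    (hna : ∀ U ∈ @nhds M τ 0, ∃ S : AddSubgroup M, τ.IsOpen (S : Set M) ∧ (S : Set M) ⊆ U)
    (f : G → H) (hf : Continuous f)
    (hcoc : ∀ x y : G, f (x + y) - f x - f y ∈ M)
    -- `M₁` is an open subgroup of `M` with `M₁ = cl_H(M₁) ∩ M`:
    (M₁ : AddSubgroup H) (hM₁le : M₁ ≤ M)
    (hM₁open : τ.IsOpen {m : M | (m : H) ∈ M₁})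
    (hM₁cl : (M₁ : Set H) = closure (M₁ : Set H) ∩ (M : Set H)) :
    ∃ (x₁ y₁ : G) (G₁ : AddSubgroup G), IsOpen (G₁ : Set G) ∧
      ∀ x ∈ G₁, ∀ y ∈ G₁,
        (f (x₁ + y₁ + (x + y)) - f (x₁ + y₁)) - (f (x₁ + y₁ + x) - f (x₁ + y₁)) -
          (f (x₁ + y₁ + y) - f (x₁ + y₁)) ∈ M₁ := by
  classical
  letI : TopologicalSpace ↥M := τ
  haveI : PolishSpace ↥M := hPol
  haveI : IsTopologicalAddGroup ↥M := hTG
  borelize (G × G)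
  haveI : BaireSpace (G × G) := by
    letI := TopologicalSpace.upgradeIsCompletelyMetrizable (G × G)
    exact BaireSpace.of_completelyPseudoMetrizable
  haveI : Nonempty G := ⟨0⟩
  -- the cocycle
  set w : G × G → H := fun p => f (p.1 + p.2) - f p.1 - f p.2 with hw
  have hwc : Continuous w :=
    ((hf.comp (continuous_fst.add continuous_snd)).sub (hf.comp continuous_fst)).sub
      (hf.comp continuous_snd)
  have hwM : ∀ p : G × G, w p ∈ M := fun p => hcoc p.1 p.2
  set Vs : Set ↥M := {m : ↥M | (m : H) ∈ M₁} with hVs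
  have hVsopen : IsOpen Vs := hM₁open
  have hVs0 : (0 : ↥M) ∈ Vs := by
    show ((0 : ↥M) : H) ∈ M₁; simpa using M₁.zero_mem
  set A : ↥M → Set (G × G) :=
    fun d => w ⁻¹' (Subtype.val '' ((fun m : ↥M => m - d) ⁻¹' Vs)) with hA
  have hAmem : ∀ (d : ↥M) (p : G × G), p ∈ A d ↔ w p - (d : H) ∈ M₁ := by
    intro d p
    constructor
    · rintro ⟨m, hm, hmp⟩
      rw [← hmp]
      simpa [Vs, AddSubgroup.coe_sub] using hm
    · intro h
      exact ⟨⟨w p, hwM p⟩, by simpa [Vs, AddSubgroup.coe_sub] using h, rfl⟩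
  have hAbm : ∀ d : ↥M, BaireMeasurableSet (A d) := fun d =>
    (hwc.measurable (hBorel _ (hVsopen.preimage (continuous_id.sub continuous_const)))).baireMeasurableSet
  -- countable cover by the `A d`
  obtain ⟨D, hDc, hDd⟩ := TopologicalSpace.exists_countable_dense ↥M
  have hcover : ∀ p : G × G, ∃ d ∈ D, p ∈ A d := by
    intro p
    have hopen : IsOpen ((fun d : ↥M => (⟨w p, hwM p⟩ : ↥M) - d) ⁻¹' Vs) :=
      hVsopen.preimage (continuous_const.sub continuous_id)
    have hne : ((fun d : ↥M => (⟨w p, hwM p⟩ : ↥M) - d) ⁻¹' Vs).Nonempty :=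
      ⟨⟨w p, hwM p⟩, by simpa [sub_self] using hVs0⟩
    obtain ⟨d, hdD, hdm⟩ := hDd.exists_mem_open hopen hne
    refine ⟨d, hdD, (hAmem d p).mpr ?_⟩
    simpa [Vs, AddSubgroup.coe_sub] using hdm
  -- one of them is non-meager
  have hnonmeager : ∃ d ∈ D, ¬ IsMeagre (A d) := by
    by_contra hcon
    push_neg at hcon
    have hres : (⋂ d ∈ D, (A d)ᶜ) ∈ residual (G × G) :=
      (countable_bInter_mem hDc).mpr fun d hd => hcon d hd
    obtain ⟨q, hq⟩ := (dense_of_mem_residual hres).nonempty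
    simp only [mem_iInter, mem_compl_iff] at hq
    obtain ⟨d, hdD, hdq⟩ := hcover q
    exact hq d hdD hdq
  obtain ⟨d, -, hdnm⟩ := hnonmeager
  obtain ⟨u, huo, hAu⟩ := (hAbm d).residualEq_isOpen
  have hSm : IsMeagre (u \ A d) := by
    have h1 : {p : G × G | (p ∈ A d) = (p ∈ u)} ∈ residual _ := hAu
    refine Filter.mem_of_superset h1 fun p hp => ?_
    simp only [mem_setOf_eq, eq_iff_iff] at hp
    simp only [mem_compl_iff, mem_diff, not_and, not_not]
    tauto
  have hm2 : IsMeagre (A d \ u) := by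
    have h1 : {p : G × G | (p ∈ A d) = (p ∈ u)} ∈ residual _ := hAu
    refine Filter.mem_of_superset h1 fun p hp => ?_
    simp only [mem_setOf_eq, eq_iff_iff] at hp
    simp only [mem_compl_iff, mem_diff, not_and, not_not]
    tauto
  have hune : u.Nonempty := by
    rcases eq_empty_or_nonempty u with h | h
    · rw [h, diff_empty] at hm2
      exact absurd hm2 hdnm
    · exact h
  set S : Set (G × G) := u \ A d with hS
  -- Kuratowski–Ulam for both coordinates
  have hT1 : {x : G | IsMeagre {b : G | (x, b) ∈ S}} ∈ residual G := aux_ku hSm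
  have hT2 : {y : G | IsMeagre {a : G | (a, y) ∈ S}} ∈ residual G := by
    have hswap : IsMeagre (Prod.swap ⁻¹' S : Set (G × G)) :=
      hSm.preimage_of_isOpenMap continuous_swap (Homeomorph.prodComm G G).isOpenMap
    exact Filter.mem_of_superset (aux_ku hswap) fun y hy => hy
  -- choose a good point (x₁, y₁)
  have hR : (Sᶜ ∩ (Prod.fst ⁻¹' {x : G | IsMeagre {b : G | (x, b) ∈ S}}) ∩
      (Prod.snd ⁻¹' {y : G | IsMeagre {a : G | (a, y) ∈ S}})) ∈ residual (G × G) := by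
    refine inter_mem (inter_mem hSm ?_) ?_
    · exact tendsto_residual_of_isOpenMap continuous_fst isOpenMap_fst hT1
    · exact tendsto_residual_of_isOpenMap continuous_snd isOpenMap_snd hT2
  obtain ⟨⟨x₁, y₁⟩, hpu, hpR⟩ := (dense_of_mem_residual hR).inter_open_nonempty u huo hune
  obtain ⟨⟨hpS, hx₁T⟩, hy₁T⟩ := hpR
  have hpA : (x₁, y₁) ∈ A d := by
    by_contra hcon
    exact hpS ⟨hpu, hcon⟩
  obtain ⟨u₁, u₂, h₁o, h₂o, hx₁u, hy₁u, hbox⟩ := isOpen_prod_iff.mp huo x₁ y₁ hpu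
  obtain ⟨Ga, hGao, hGas⟩ := hGna {g : G | x₁ + g ∈ u₁} (by
    have h0 : x₁ + (0 : G) ∈ u₁ := by simpa using hx₁u
    exact (h₁o.preimage (continuous_const.add continuous_id)).mem_nhds h0)
  obtain ⟨Gb, hGbo, hGbs⟩ := hGna {g : G | y₁ + g ∈ u₂} (by
    have h0 : y₁ + (0 : G) ∈ u₂ := by simpa using hy₁u
    exact (h₂o.preimage (continuous_const.add continuous_id)).mem_nhds h0)
  refine ⟨x₁, y₁, Ga ⊓ Gb, by rw [AddSubgroup.coe_inf]; exact hGao.inter hGbo, ?_⟩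
  intro x hx y hy
  -- the function φ and its properties
  set φ : G × G → H := fun q =>
    (f (x₁ + y₁ + (q.1 + q.2)) - f (x₁ + y₁)) - (f (x₁ + y₁ + q.1) - f (x₁ + y₁)) -
      (f (x₁ + y₁ + q.2) - f (x₁ + y₁)) with hφ
  have hφc : Continuous φ := by
    refine Continuous.sub (Continuous.sub (Continuous.sub ?_ continuous_const)
      (Continuous.sub ?_ continuous_const)) (Continuous.sub ?_ continuous_const)
    · exact hf.comp (continuous_const.add (continuous_fst.add continuous_snd))
    · exact hf.comp (continuous_const.add continuous_fst)
    · exact hf.comp (continuous_const.add continuous_snd)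
  have hiden : ∀ q : G × G,
      φ q = w (x₁ + q.1, y₁ + q.2) - w (x₁ + q.1, y₁) - w (x₁, y₁ + q.2) + w (x₁, y₁) := by
    intro q
    simp only [hφ, hw]
    have e1 : x₁ + q.1 + (y₁ + q.2) = x₁ + y₁ + (q.1 + q.2) := by abel
    have e2 : x₁ + q.1 + y₁ = x₁ + y₁ + q.1 := by abel
    have e3 : x₁ + (y₁ + q.2) = x₁ + y₁ + q.2 := by abel
    rw [e1, e2, e3]
    abel
  have hφM : ∀ q : G × G, φ q ∈ M := fun q => by
    rw [hiden q]
    exact M.add_mem (M.sub_mem (M.sub_mem (hwM _) (hwM _)) (hwM _)) (hwM _)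
  have hbox' : ∀ a ∈ Ga, ∀ b ∈ Gb, (x₁ + a, y₁ + b) ∈ u := fun a ha b hb =>
    hbox ⟨hGas ha, hGbs hb⟩
  -- the meager "bad" set
  set F : Set (G × G) :=
      ((fun q : G × G => (x₁ + q.1, y₁ + q.2)) ⁻¹' S) ∪
      (Prod.fst ⁻¹' ((fun a : G => x₁ + a) ⁻¹' {a : G | (a, y₁) ∈ S})) ∪
      (Prod.snd ⁻¹' ((fun b : G => y₁ + b) ⁻¹' {b : G | (x₁, b) ∈ S})) with hF
  have hFm : IsMeagre F := by
    have hF1 : IsMeagre ((fun q : G × G => (x₁ + q.1, y₁ + q.2)) ⁻¹' S) := by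
      exact hSm.preimage_of_isOpenMap
        ((continuous_const.add continuous_fst).prodMk (continuous_const.add continuous_snd))
        (((Homeomorph.addLeft x₁).isOpenMap).prodMap ((Homeomorph.addLeft y₁).isOpenMap))
    have hF2 : IsMeagre ((Prod.fst : G × G → G) ⁻¹' ((fun a : G => x₁ + a) ⁻¹' {a : G | (a, y₁) ∈ S})) :=
      ((hy₁T.preimage_of_isOpenMap (continuous_const.add continuous_id)
        (Homeomorph.addLeft x₁).isOpenMap)).preimage_of_isOpenMap continuous_fst isOpenMap_fst
    have hF3 : IsMeagre ((Prod.snd : G × G → G) ⁻¹' ((fun b : G => y₁ + b) ⁻¹' {b : G | (x₁, b) ∈ S})) :=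
      ((hx₁T.preimage_of_isOpenMap (continuous_const.add continuous_id)
        (Homeomorph.addLeft y₁).isOpenMap)).preimage_of_isOpenMap continuous_snd isOpenMap_snd
    show (_ ∪ _ ∪ _ : Set (G × G))ᶜ ∈ residual _
    rw [compl_union, compl_union]
    exact inter_mem (inter_mem hF1 hF2) hF3
  -- on the good set, φ lands in M₁
  have hkey : ∀ q ∈ (((Ga ⊓ Gb : AddSubgroup G) : Set G) ×ˢ
      ((Ga ⊓ Gb : AddSubgroup G) : Set G)) \ F, φ q ∈ M₁ := by
    rintro ⟨a, b⟩ ⟨⟨haG, hbG⟩, hqF⟩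
    have haGa : a ∈ Ga := (AddSubgroup.mem_inf.mp haG).1
    have hbGb : b ∈ Gb := (AddSubgroup.mem_inf.mp hbG).2
    simp only [hF, mem_union, mem_preimage, mem_setOf_eq, not_or] at hqF
    obtain ⟨⟨h1, h2⟩, h3⟩ := hqF
    have hq1 : (x₁ + a, y₁ + b) ∈ A d := by
      by_contra hcon
      exact h1 ⟨hbox' a haGa b hbGb, hcon⟩
    have hq2 : (x₁ + a, y₁) ∈ A d := by
      by_contra hcon
      exact h2 ⟨hbox ⟨hGas haGa, hy₁u⟩, hcon⟩
    have hq3 : (x₁, y₁ + b) ∈ A d := by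
      by_contra hcon
      exact h3 ⟨hbox ⟨hx₁u, hGbs hbGb⟩, hcon⟩
    have hm1 := (hAmem d _).mp hq1
    have hm2' := (hAmem d _).mp hq2
    have hm3 := (hAmem d _).mp hq3
    have hm0 := (hAmem d _).mp hpA
    have : φ (a, b) = (w (x₁ + a, y₁ + b) - (d : H)) - (w (x₁ + a, y₁) - (d : H)) -
        (w (x₁, y₁ + b) - (d : H)) + (w (x₁, y₁) - (d : H)) := by
      rw [hiden (a, b)]
      abel
    rw [this]
    exact M₁.add_mem (M₁.sub_mem (M₁.sub_mem hm1 hm2') hm3) hm0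
  -- conclusion by density and the closure condition
  have hboxopen : IsOpen (((Ga ⊓ Gb : AddSubgroup G) : Set G) ×ˢ
      ((Ga ⊓ Gb : AddSubgroup G) : Set G)) := by
    rw [AddSubgroup.coe_inf]
    exact (hGao.inter hGbo).prod (hGao.inter hGbo)
  have hxy : (x, y) ∈ closure ((((Ga ⊓ Gb : AddSubgroup G) : Set G) ×ˢ
      ((Ga ⊓ Gb : AddSubgroup G) : Set G)) \ F) := by
    rw [mem_closure_iff]
    intro O hO hmemO
    have hO' : IsOpen (O ∩ (((Ga ⊓ Gb : AddSubgroup G) : Set G) ×ˢ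
        ((Ga ⊓ Gb : AddSubgroup G) : Set G))) := hO.inter hboxopen
    have hne' : (O ∩ (((Ga ⊓ Gb : AddSubgroup G) : Set G) ×ˢ
        ((Ga ⊓ Gb : AddSubgroup G) : Set G))).Nonempty := ⟨(x, y), hmemO, ⟨hx, hy⟩⟩
    obtain ⟨q, hq1, hq2⟩ := (dense_of_mem_residual hFm).inter_open_nonempty _ hO' hne'
    exact ⟨q, hq1.1, ⟨hq1.2, hq2⟩⟩
  have hsub : (((Ga ⊓ Gb : AddSubgroup G) : Set G) ×ˢ
      ((Ga ⊓ Gb : AddSubgroup G) : Set G)) \ F ⊆ φ ⁻¹' closure (M₁ : Set H) :=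
    fun q hq => subset_closure (hkey q hq)
  have hclosed : IsClosed (φ ⁻¹' closure (M₁ : Set H)) := isClosed_closure.preimage hφc
  have hmem2 : φ (x, y) ∈ closure (M₁ : Set H) := closure_minimal hsub hclosed hxy
  have hfinal : φ (x, y) ∈ (M₁ : Set H) := by
    rw [hM₁cl]
    exact ⟨hmem2, hφM (x, y)⟩
  exact hfinal
end

section
/- Let G be a non-Archimedean abelian Polish group, Ĥ an abelian Polish group, and M a non-Archimedean Polishable subgroup of Ĥ. Let F : G → Ĥ be a Borel map with F(x+y) − F(x) − F(y) ∈ M for all x, y ∈ G (a Borel lift of a homomorphism φ : G → Ĥ/M). Let (Ĥ_k)_{k∈ω} be a decreasing neighborhood basis of 0 in Ĥ with Ĥ₀ = Ĥ, and let (M_k)_{k∈ω} be a decreasing neighborhood basis of 0 in the Polish group topology of M consisting of subgroups, with M₀ = M and M_k = cl_Ĥ(M_k) ∩ M ⊆ Ĥ_k for every k. Then there exist a decreasing neighborhood basis (G_k)_{k∈ω} of 0 in G consisting of subgroups with G₀ = G, and a continuous function g : G → Ĥ with g(x) − F(x) ∈ M for all x ∈ G, such that for every k ∈ ω and all x, y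 ∈ G_k one has g(x+y) − g(x) − g(y) ∈ M_k and g(x) ∈ Ĥ_k. -/
open Topology Filter Set

lemma union_meagre {X : Type*} [TopologicalSpace X] {A B : Set X} (hA : IsMeagre A)
    (hB : IsMeagre B) : IsMeagre (A ∪ B) := by
  rw [IsMeagre, Set.compl_union]; exact Filter.inter_mem hA hB

section Tools
variable {X Y : Type*} [TopologicalSpace X] [TopologicalSpace Y]

lemma polish_baire (X : Type*) [TopologicalSpace X] [PolishSpace X] : BaireSpace X := by
  letI := TopologicalSpace.upgradeIsCompletelyMetrizable X; infer_instance

/-- In a Baire space, a nonempty open set is not meager. -/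
lemma not_meager_of_open [BaireSpace X] {O : Set X} (hO : IsOpen O) (hne : O.Nonempty) :
    ¬ IsMeagre O := by
  intro h
  have hd : Dense Oᶜ := dense_of_mem_residual h
  obtain ⟨x, hx⟩ := hne
  obtain ⟨y, hy1, hy2⟩ := hd.inter_open_nonempty O hO ⟨x, hx⟩
  exact hy2 hy1

/-- Intersection of two "comeager in O" sets meets O. -/
lemma nonempty_of_meager_compl [BaireSpace X] {O A B : Set X} (hO : IsOpen O)
    (hne : O.Nonempty) (hA : IsMeagre (O \ A)) (hB : IsMeagre (O \ B)) :
    (O ∩ (A ∩ B)).Nonempty := by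
  by_contra h
  rw [Set.not_nonempty_iff_eq_empty] at h
  have : O ⊆ (O \ A) ∪ (O \ B) := by
    intro x hx
    by_cases hxA : x ∈ A
    · by_cases hxB : x ∈ B
      · exact absurd (Set.eq_empty_iff_forall_notMem.1 h x ⟨hx, hxA, hxB⟩) (fun f => f)
      · exact Or.inr ⟨hx, hxB⟩
    · exact Or.inl ⟨hx, hxA⟩
  exact not_meager_of_open hO hne ((union_meagre hA hB).mono this)

end Tools

section KU
variable {X Y : Type*} [TopologicalSpace X] [TopologicalSpace Y] [SecondCountableTopology Y]

lemma dense_section_residual {U : Set (X × Y)} (hU : IsOpen U) (hd : Dense U) :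
    {x : X | Dense {y : Y | (x, y) ∈ U}} ∈ residual X := by
  obtain ⟨B, hBc, -, hB⟩ := TopologicalSpace.exists_countable_basis Y
  have key : ∀ b ∈ B, b.Nonempty → IsOpen {x : X | ∃ y ∈ b, (x, y) ∈ U} ∧
      Dense {x : X | ∃ y ∈ b, (x, y) ∈ U} := by
    intro b hb hbne
    constructor
    · have : {x : X | ∃ y ∈ b, (x, y) ∈ U} = Prod.fst '' (U ∩ Set.univ ×ˢ b) := by
        ext x
        simp only [Set.mem_setOf_eq, Set.mem_image, Set.mem_inter_iff, Set.mem_prod,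
          Set.mem_univ, true_and]
        constructor
        · rintro ⟨y, hy1, hy2⟩; exact ⟨(x, y), ⟨hy2, hy1⟩, rfl⟩
        · rintro ⟨⟨x', y⟩, ⟨h1, h2⟩, rfl⟩; exact ⟨y, h2, h1⟩
      rw [this]
      exact isOpenMap_fst _ (hU.inter (isOpen_univ.prod (hB.isOpen hb)))
    · rw [dense_iff_inter_open]
      intro W hW hWne
      obtain ⟨⟨x, y⟩, hxy1, hxy2⟩ := hd.inter_open_nonempty (W ×ˢ b)
        (hW.prod (hB.isOpen hb)) (hWne.prod hbne)
      exact ⟨x, hxy1.1, y, hxy1.2, hxy2⟩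
  have : (⋂ b ∈ {b ∈ B | b.Nonempty}, {x : X | ∃ y ∈ b, (x, y) ∈ U}) ∈ residual X := by
    refine (countable_bInter_mem (hBc.mono (Set.sep_subset _ _))).2 ?_
    rintro b ⟨hb, hbne⟩
    exact residual_of_dense_open (key b hb hbne).1 (key b hb hbne).2
  refine Filter.mem_of_superset this ?_
  intro x hx
  simp only [Set.mem_iInter, Set.mem_setOf_eq] at hx
  show Dense {y : Y | (x, y) ∈ U}
  rw [hB.dense_iff]
  intro o ho hone
  obtain ⟨y, hy1, hy2⟩ := hx o ⟨ho, hone⟩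
  exact ⟨y, hy1, hy2⟩

/-- One direction of Kuratowski-Ulam: a meager set in a product has meager sections
over a comeager set of points. -/
lemma meagre_sections {s : Set (X × Y)} (hs : IsMeagre s) :
    {x : X | IsMeagre {y : Y | (x, y) ∈ s}} ∈ residual X := by
  obtain ⟨S, hSnwd, hSc, hSsub⟩ := isMeagre_iff_countable_union_isNowhereDense.1 hs
  have key : ∀ t ∈ S, {x : X | Dense {y : Y | (x, y) ∈ (closure t)ᶜ}} ∈ residual X := by
    intro t ht
    refine dense_section_residual isClosed_closure.isOpen_compl ?_
    have : IsNowhereDense (closure t) := (hSnwd t ht).closure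
    rwa [IsClosed.isNowhereDense_iff isClosed_closure,
      interior_eq_empty_iff_dense_compl] at this
  have : (⋂ t ∈ S, {x : X | Dense {y : Y | (x, y) ∈ (closure t)ᶜ}}) ∈ residual X :=
    (countable_bInter_mem hSc).2 key
  refine Filter.mem_of_superset this ?_
  intro x hx
  simp only [Set.mem_iInter, Set.mem_setOf_eq] at hx ⊢
  rw [isMeagre_iff_countable_union_isNowhereDense]
  refine ⟨(fun t => {y : Y | (x, y) ∈ closure t}) '' S, ?_, hSc.image _, ?_⟩
  · rintro - ⟨t, ht, rfl⟩
    have hcl : IsClosed {y : Y | (x, y) ∈ closure t} :=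
      isClosed_closure.preimage (Continuous.prodMk_right x)
    rw [hcl.isNowhereDense_iff, interior_eq_empty_iff_dense_compl]
    exact hx t ht
  · intro y hy
    obtain ⟨t, ht, hyt⟩ := hSsub hy
    exact Set.mem_sUnion.2 ⟨_, ⟨t, ht, rfl⟩, subset_closure hyt⟩
end KU

section BP
variable {X Y : Type*} [TopologicalSpace X] [TopologicalSpace Y]

lemma residualEq_diff_meagre {s u : Set X} (h : s =ᵇ u) :
    IsMeagre (s \ u) ∧ IsMeagre (u \ s) := by
  rw [Filter.eventuallyEq_set] at h
  constructor <;>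
  · refine Filter.mem_of_superset h ?_
    intro x hx
    simp only [Set.mem_compl_iff, Set.mem_diff, Set.mem_setOf_eq] at *
    tauto

lemma bp_exists_open {s : Set X} (hs : BaireMeasurableSet s) (hnm : ¬ IsMeagre s) :
    ∃ O : Set X, IsOpen O ∧ O.Nonempty ∧ IsMeagre (O \ s) ∧ IsMeagre (s \ O) := by
  obtain ⟨u, huo, hsu⟩ := hs.residualEq_isOpen
  obtain ⟨h1, h2⟩ := residualEq_diff_meagre hsu
  rcases Set.eq_empty_or_nonempty u with hu | hu
  · exfalso; apply hnm; rw [← Set.diff_empty (s := s), ← hu]; exact h1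
  · exact ⟨u, huo, hu, h2, h1⟩

lemma IsNowhereDense.isMeagre' {t : Set X} (h : IsNowhereDense t) : IsMeagre t := by
  rw [isMeagre_iff_countable_union_isNowhereDense]
  exact ⟨{t}, by simpa using h, Set.countable_singleton t, by simp⟩

variable [SecondCountableTopology Y] [BaireSpace Y]

/-- The "category quantifier" preserves the Baire property. -/
lemma vaught_bp {s : Set (X × Y)} (hs : BaireMeasurableSet s) {O : Set Y} (hO : IsOpen O) :
    BaireMeasurableSet {x : X | IsMeagre (O \ {y : Y | (x, y) ∈ s})} := by
  obtain ⟨u, huo, hsu⟩ := hs.residualEq_isOpen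
  obtain ⟨B, hBc, -, hB⟩ := TopologicalSpace.exists_countable_basis Y
  set E : Set (X × Y) := (s \ u) ∪ (u \ s) with hE
  have hEm : IsMeagre E :=
    union_meagre (residualEq_diff_meagre hsu).1 (residualEq_diff_meagre hsu).2
  set D : Set X := ⋂ b ∈ {b ∈ B | (b ∩ O).Nonempty}, {x : X | ∃ y ∈ b ∩ O, (x, y) ∈ u}
    with hD
  have hDbp : BaireMeasurableSet D := by
    refine BaireMeasurableSet.biInter (hBc.mono (Set.sep_subset _ _)) ?_
    rintro b ⟨hb, -⟩
    refine IsOpen.baireMeasurableSet ?_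
    have : {x : X | ∃ y ∈ b ∩ O, (x, y) ∈ u} = Prod.fst '' (u ∩ Set.univ ×ˢ (b ∩ O)) := by
      ext x
      simp only [Set.mem_setOf_eq, Set.mem_image, Set.mem_inter_iff, Set.mem_prod,
        Set.mem_univ, true_and]
      constructor
      · rintro ⟨y, hy1, hy2⟩; exact ⟨(x, y), ⟨hy2, hy1⟩, rfl⟩
      · rintro ⟨⟨x', y⟩, ⟨h1, h2⟩, rfl⟩; exact ⟨y, h2, h1⟩
    rw [this]
    exact isOpenMap_fst _ (huo.inter (isOpen_univ.prod ((hB.isOpen hb).inter hO)))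
  have hEg : {x : X | IsMeagre {y : Y | (x, y) ∈ E}} ∈ residual X := meagre_sections hEm
  have key : ∀ x, IsMeagre {y : Y | (x, y) ∈ E} →
      (IsMeagre (O \ {y : Y | (x, y) ∈ s}) ↔ x ∈ D) := by
    intro x hx
    constructor
    · intro hm
      have hOu : IsMeagre (O \ {y : Y | (x, y) ∈ u}) := by
        refine (union_meagre hm hx).mono ?_
        intro y hy
        rcases hy with ⟨hyO, hyu⟩
        by_cases hys : (x, y) ∈ s
        · exact Or.inr (Or.inl ⟨hys, hyu⟩)
        · exact Or.inl ⟨hyO, hys⟩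
      simp only [hD, Set.mem_iInter, Set.mem_setOf_eq]
      rintro b ⟨hb, hbne⟩
      by_contra hcon
      push_neg at hcon
      have hsub : b ∩ O ⊆ O \ {y : Y | (x, y) ∈ u} := by
        intro y hy
        exact ⟨hy.2, fun hyu => hcon y hy hyu⟩
      exact not_meager_of_open ((hB.isOpen hb).inter hO) hbne (hOu.mono hsub)
    · intro hxD
      have hnwd : IsNowhereDense (O \ {y : Y | (x, y) ∈ u}) := by
        rw [IsNowhereDense]
        rw [Set.eq_empty_iff_forall_notMem]
        intro y hy
        obtain ⟨b, hb, hyb, hbsub⟩ := hB.exists_subset_of_mem_open hy isOpen_interior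
        have hbsub : b ⊆ closure (O \ {y : Y | (x, y) ∈ u}) := hbsub.trans interior_subset
        have hbOne : (b ∩ (O \ {y : Y | (x, y) ∈ u})).Nonempty := by
          obtain ⟨w, hw1, hw2⟩ := mem_closure_iff.1 (hbsub hyb) b (hB.isOpen hb) hyb
          exact ⟨w, hw1, hw2⟩
        have hbO : (b ∩ O).Nonempty := hbOne.mono (fun z hz => ⟨hz.1, hz.2.1⟩)
        simp only [hD, Set.mem_iInter, Set.mem_setOf_eq] at hxD
        obtain ⟨z, hz1, hz2⟩ := hxD b ⟨hb, hbO⟩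
        -- b ∩ u_x is open nonempty, inside closure of O \ u_x : contradiction
        have hzopen : IsOpen (b ∩ {y : Y | (x, y) ∈ u}) :=
          (hB.isOpen hb).inter (huo.preimage (Continuous.prodMk_right x))
        have hzne : (b ∩ {y : Y | (x, y) ∈ u}).Nonempty := ⟨z, hz1.1, hz2⟩
        obtain ⟨w, hw1, hw2⟩ := hzne
        have hwcl : w ∈ closure (O \ {y : Y | (x, y) ∈ u}) := hbsub hw1
        obtain ⟨v, hv1, hv2⟩ := mem_closure_iff.1 hwcl _ hzopen ⟨hw1, hw2⟩
        exact hv2.2 hv1.2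
      refine ((union_meagre hnwd.isMeagre' hx).mono ?_)
      intro y hy
      by_cases hyu : (x, y) ∈ u
      · exact Or.inr (Or.inr ⟨hyu, hy.2⟩)
      · exact Or.inl ⟨hy.1, hyu⟩
  refine hDbp.congr ?_
  rw [Filter.eventuallyEq_set]
  refine Filter.mem_of_superset hEg ?_
  intro x hx
  simp only [Set.mem_setOf_eq] at hx ⊢
  exact (key x hx).symm
end BP


section Complete

/-- A dense inducing image of a Polish space in a Polish space is comeager. -/
lemma dense_polish_range_residual {K X : Type*} [TopologicalSpace K] [PolishSpace K]
    [TopologicalSpace X] [PolishSpace X] {f : K → X} (hind : Topology.IsInducing f)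
    (hd : DenseRange f) : Set.range f ∈ residual X := by
  letI := TopologicalSpace.upgradeIsCompletelyMetrizable K
  letI := TopologicalSpace.upgradeIsCompletelyMetrizable X
  set W : ℕ → Set X := fun m =>
    ⋃₀ {V : Set X | IsOpen V ∧ ∀ a b : K, f a ∈ V → f b ∈ V → dist a b ≤ 1 / (m + 1)} with hW
  have hWopen : ∀ m, IsOpen (W m) := fun m => isOpen_sUnion (fun V hV => hV.1)
  have hrange : ∀ m, Set.range f ⊆ W m := by
    rintro m - ⟨a, rfl⟩
    have hball : Metric.ball a (1 / (2 * (m + 1))) ∈ nhds a := by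
      apply Metric.ball_mem_nhds
      positivity
    rw [hind.nhds_eq_comap, Filter.mem_comap] at hball
    obtain ⟨t, ht, htsub⟩ := hball
    obtain ⟨V, hVsub, hVopen, hfaV⟩ := mem_nhds_iff.1 ht
    refine Set.mem_sUnion.2 ⟨V, ⟨hVopen, ?_⟩, hfaV⟩
    intro a' b' ha' hb'
    have h1 : a' ∈ Metric.ball a (1 / (2 * (m + 1))) := htsub (hVsub ha')
    have h2 : b' ∈ Metric.ball a (1 / (2 * (m + 1))) := htsub (hVsub hb')
    rw [Metric.mem_ball] at h1 h2
    have h3 : dist a' b' ≤ dist a' a + dist a b' := dist_triangle _ _ _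
    rw [dist_comm a b'] at h3
    have hm1 : ((m:ℝ) + 1) ≠ 0 := by positivity
    have hhalf : (1:ℝ) / (2 * ((m:ℝ) + 1)) + 1 / (2 * ((m:ℝ) + 1)) = 1 / ((m:ℝ) + 1) := by
      field_simp
      all_goals norm_num
    linarith
  have hsub : (⋂ m, W m) ⊆ Set.range f := by
    intro z hz
    simp only [Set.mem_iInter] at hz
    have hVm : ∀ m : ℕ, ∃ V : Set X,
        (IsOpen V ∧ ∀ a b : K, f a ∈ V → f b ∈ V → dist a b ≤ 1 / (m + 1)) ∧ z ∈ V := by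
      intro m
      obtain ⟨V, hV, hzV⟩ := Set.mem_sUnion.1 (hz m)
      exact ⟨V, hV, hzV⟩
    choose V hV hzV using hVm
    have hex : ∀ m : ℕ, ∃ a : K, f a ∈ (⋂ i ∈ Set.Iic m, V i) ∩ Metric.ball z (1 / (m + 1)) := by
      intro m
      have hopen : IsOpen ((⋂ i ∈ Set.Iic m, V i) ∩ Metric.ball z (1 / (m + 1))) :=
        ((Set.finite_Iic m).isOpen_biInter (fun i _ => (hV i).1)).inter Metric.isOpen_ball
      have hzmem : z ∈ (⋂ i ∈ Set.Iic m, V i) ∩ Metric.ball z (1 / (m + 1)) :=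
        Set.mem_inter (Set.mem_biInter fun i _ => hzV i)
          (Metric.mem_ball_self (by positivity))
      exact hd.exists_mem_open hopen ⟨z, hzmem⟩
    choose a ha using hex
    have hcauchy : CauchySeq a := by
      apply cauchySeq_of_le_tendsto_0 (b := fun n : ℕ => 1 / (n + 1))
      · intro n m N hn hm
        have h1 : f (a n) ∈ V N := by
          have := (ha n).1
          simp only [Set.mem_iInter] at this
          exact this N (Set.mem_Iic.2 hn)
        have h2 : f (a m) ∈ V N := by
          have := (ha m).1
          simp only [Set.mem_iInter] at this
          exact this N (Set.mem_Iic.2 hm)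
        exact (hV N).2 _ _ h1 h2
      · exact tendsto_one_div_add_atTop_nhds_zero_nat
    obtain ⟨x, hx⟩ := cauchySeq_tendsto_of_complete hcauchy
    have h1 : Filter.Tendsto (fun m => f (a m)) Filter.atTop (nhds (f x)) :=
      (hind.continuous.tendsto x).comp hx
    have h2 : Filter.Tendsto (fun m => f (a m)) Filter.atTop (nhds z) := by
      rw [tendsto_iff_dist_tendsto_zero]
      refine squeeze_zero (fun m => dist_nonneg) (fun m => ?_)
        tendsto_one_div_add_atTop_nhds_zero_nat
      exact le_of_lt (Metric.mem_ball.1 (ha m).2)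
    exact ⟨x, tendsto_nhds_unique h1 h2⟩
  have heq : Set.range f = ⋂ m, W m :=
    Set.Subset.antisymm (Set.subset_iInter hrange) hsub
  rw [heq]
  exact countable_iInter_mem.2 fun m =>
    residual_of_dense_open (hWopen m) (hd.mono (hrange m))

/-- Sequential completeness of non-archimedean Polish abelian groups. -/
lemma nonarch_polish_limit {K : Type*} [TopologicalSpace K] [AddCommGroup K]
    [IsTopologicalAddGroup K] [PolishSpace K] (N : ℕ → AddSubgroup K)
    (hopen : ∀ n, IsOpen (N n : Set K))
    (hbasis : ∀ U ∈ nhds (0 : K), ∃ n, (N n : Set K) ⊆ U)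
    (s : ℕ → K) (hs : ∀ m n, m ≤ n → s n - s m ∈ N m) :
    ∃ x : K, ∀ n, x - s n ∈ N n := by
  classical
  haveI hdisc : ∀ n, DiscreteTopology (K ⧸ N n) := by
    intro n
    rw [discreteTopology_iff_isOpen_singleton]
    intro q
    obtain ⟨z, rfl⟩ := QuotientAddGroup.mk_surjective q
    have hco : IsOpen ((fun y => -z + y) ⁻¹' (N n : Set K)) :=
      (hopen n).preimage (continuous_const.add continuous_id)
    have himg : ({((z : K ⧸ N n))} : Set (K ⧸ N n)) =
        QuotientAddGroup.mk '' ((fun y => -z + y) ⁻¹' (N n : Set K)) := by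
      ext q'
      simp only [Set.mem_singleton_iff, Set.mem_image, Set.mem_preimage, SetLike.mem_coe]
      constructor
      · rintro rfl
        exact ⟨z, by simpa using (N n).zero_mem, rfl⟩
      · rintro ⟨y, hy, rfl⟩
        exact ((QuotientAddGroup.eq).2 hy).symm
    rw [himg]
    exact QuotientAddGroup.isOpenMap_coe _ hco
  haveI hcnt : ∀ n, Countable (K ⧸ N n) := by
    intro n
    obtain ⟨D, hDc, hDd⟩ := TopologicalSpace.exists_countable_dense K
    rw [← Set.countable_univ_iff]
    have huniv : (Set.univ : Set (K ⧸ N n)) = QuotientAddGroup.mk '' D := by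
      refine Set.eq_of_subset_of_subset ?_ (Set.subset_univ _)
      rintro q -
      obtain ⟨z, rfl⟩ := QuotientAddGroup.mk_surjective q
      have hco : IsOpen ((fun y => -z + y) ⁻¹' (N n : Set K)) :=
        (hopen n).preimage (continuous_const.add continuous_id)
      obtain ⟨d, hd1, hd2⟩ := hDd.inter_open_nonempty _ hco
        ⟨z, by simpa using (N n).zero_mem⟩
      exact ⟨d, hd2, ((QuotientAddGroup.eq).2 hd1).symm⟩
    rw [huniv]
    exact hDc.image _
  haveI hpol : ∀ n, PolishSpace (K ⧸ N n) := fun n => inferInstance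
  set φh : K →+ (∀ n, K ⧸ N n) := AddMonoidHom.mk' (fun x n => (x : K ⧸ N n))
    (fun x y => by funext n; rfl) with hφh
  have hφcont : Continuous (φh : K → ∀ n, K ⧸ N n) :=
    continuous_pi (fun n => continuous_quotient_mk')
  have hφind : Topology.IsInducing (φh : K → ∀ n, K ⧸ N n) := by
    rw [Topology.isInducing_iff_nhds]
    intro x
    refine le_antisymm (Filter.tendsto_iff_comap.1 hφcont.continuousAt) ?_
    rw [Filter.le_def]
    intro U hU
    have hU0 : (fun v => x + v) ⁻¹' U ∈ nhds (0 : K) := by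
      have ht : Filter.Tendsto (fun v => x + v) (nhds 0) (nhds x) := by
        have := (continuous_const.add continuous_id : Continuous fun v : K => x + v)
        have h := (continuous_add_left x).tendsto (0 : K); rwa [add_zero] at h
      exact ht hU
    obtain ⟨n, hn⟩ := hbasis _ hU0
    refine Filter.mem_comap.2 ⟨{p : ∀ n, K ⧸ N n | p n = φh x n}, ?_, ?_⟩
    · have hcyl : IsOpen {p : ∀ n, K ⧸ N n | p n = φh x n} := by
        have heq : {p : ∀ n, K ⧸ N n | p n = φh x n} =
            (fun p : ∀ n, K ⧸ N n => p n) ⁻¹' {φh x n} := rfl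
        rw [heq]
        exact (isOpen_discrete _).preimage (continuous_apply n)
      exact hcyl.mem_nhds rfl
    · intro y hy
      have h1 : -x + y ∈ N n := (QuotientAddGroup.eq).1 (hy : (y : K ⧸ N n) = _).symm
      have := hn h1
      simpa using this
  set L := φh.range.topologicalClosure with hL
  haveI : PolishSpace ↥L :=
    IsClosed.polishSpace (AddSubgroup.isClosed_topologicalClosure _)
  haveI : BaireSpace ↥L := polish_baire _
  haveI : Nonempty ↥L := ⟨0⟩
  set ψ : K → ↥L := fun x => ⟨φh x, φh.range.le_topologicalClosure ⟨x, rfl⟩⟩ with hψ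
  have hψcont : Continuous ψ := hφcont.subtype_mk _
  have hψind : Topology.IsInducing ψ := Topology.IsInducing.of_comp hψcont continuous_subtype_val hφind
  have himg : Subtype.val '' Set.range ψ = (φh.range : Set (∀ n, K ⧸ N n)) := by
    ext w
    constructor
    · rintro ⟨z, ⟨x, rfl⟩, rfl⟩
      exact ⟨x, rfl⟩
    · rintro ⟨x, rfl⟩
      exact ⟨ψ x, ⟨x, rfl⟩, rfl⟩
  have hψdense : DenseRange ψ := by
    intro z
    have hz : (z : ∀ n, K ⧸ N n) ∈ closure (Subtype.val '' Set.range ψ) := by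
      rw [himg]
      exact z.2
    rw [closure_subtype]
    exact hz
  have Bres : Set.range ψ ∈ residual ↥L := dense_polish_range_residual hψind hψdense
  -- the coherent limit point
  set p : ∀ n, K ⧸ N n := fun n => ((s n : K) : K ⧸ N n) with hp
  have htend : Filter.Tendsto (fun m => (φh (s m) : ∀ n, K ⧸ N n)) Filter.atTop (nhds p) := by
    rw [tendsto_pi_nhds]
    intro n
    refine Filter.Tendsto.congr' ?_ (tendsto_const_nhds (x := p n) (f := Filter.atTop))
    filter_upwards [Filter.eventually_ge_atTop n] with m hm
    show p n = φh (s m) n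
    exact (QuotientAddGroup.eq).2 (by rw [neg_add_eq_sub]; exact hs n m hm)
  have hpmem : p ∈ L := by
    have : p ∈ closure (φh.range : Set (∀ n, K ⧸ N n)) :=
      mem_closure_of_tendsto htend (Filter.Eventually.of_forall fun m => ⟨s m, rfl⟩)
    exact this
  set phat : ↥L := ⟨p, hpmem⟩ with hphat
  have hB2 : (fun z : ↥L => phat + z) ⁻¹' (Set.range ψ) ∈ residual ↥L := by
    have := (Homeomorph.addLeft phat).residual_map_eq
    rw [← this] at Bres
    exact Filter.mem_map.1 Bres
  have hint : (Set.range ψ ∩ (fun z : ↥L => phat + z) ⁻¹' (Set.range ψ)).Nonempty :=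
    (dense_of_mem_residual (Filter.inter_mem Bres hB2)).nonempty
  obtain ⟨z, ⟨a, ha⟩, b, hb⟩ := hint
  have hval : φh (b - a) = p := by
    have h1 : (ψ a : ∀ n, K ⧸ N n) = φh a := rfl
    have h2 : (ψ b : ∀ n, K ⧸ N n) = φh b := rfl
    have h3 : ((phat + z : ↥L) : ∀ n, K ⧸ N n) = p + (z : ∀ n, K ⧸ N n) := rfl
    have h4 : (z : ∀ n, K ⧸ N n) = φh a := by rw [← ha]
    have h5 : φh b = p + φh a := by rw [← h2, hb, h3, h4]
    rw [map_sub, h5]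
    abel
  refine ⟨b - a, fun n => ?_⟩
  have : ((b - a : K) : K ⧸ N n) = ((s n : K) : K ⧸ N n) := congrFun hval n
  have := (QuotientAddGroup.eq).1 this.symm
  rwa [neg_add_eq_sub] at this

end Complete

section Helpers
set_option linter.unusedSectionVars false

variable {G : Type*} [TopologicalSpace G] [AddCommGroup G] [IsTopologicalAddGroup G]
  [MeasurableSpace G] [BorelSpace G] [PolishSpace G]
variable {H : Type*} [TopologicalSpace H] [AddCommGroup H] [IsTopologicalAddGroup H]
  [MeasurableSpace H] [BorelSpace H] [PolishSpace H]

/-- Sum of a Borel function and a countably-valued function with Baire-measurable fibers. -/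
def MeasBP (f : G → H) : Prop :=
  ∃ B e : G → H, f = (fun x => B x + e x) ∧ Measurable B ∧ (Set.range e).Countable ∧
    ∀ v : H, BaireMeasurableSet (e ⁻¹' {v})

lemma Measurable.measBP {f : G → H} (hf : Measurable f) : MeasBP f := by
  refine ⟨f, 0, by funext x; simp, hf, ?_, ?_⟩
  · exact (Set.countable_singleton (0 : H)).mono (by rintro - ⟨x, rfl⟩; simp)
  · intro v
    rcases eq_or_ne (0 : H) v with h | h
    · have heq : ((0 : G → H) ⁻¹' {v}) = Set.univ := by
        ext x
        simp only [Set.mem_preimage, Pi.zero_apply, Set.mem_singleton_iff, Set.mem_univ,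
          iff_true]
        exact h
      rw [heq]; exact isOpen_univ.baireMeasurableSet
    · have heq : ((0 : G → H) ⁻¹' {v}) = ∅ := by
        ext x
        simp only [Set.mem_preimage, Pi.zero_apply, Set.mem_singleton_iff,
          Set.mem_empty_iff_false, iff_false]
        exact h
      rw [heq]; exact isOpen_empty.baireMeasurableSet

lemma measBP_of_countable {e : G → H} (hc : (Set.range e).Countable)
    (hbp : ∀ v : H, BaireMeasurableSet (e ⁻¹' {v})) : MeasBP e :=
  ⟨0, e, by funext x; simp, measurable_zero, hc, hbp⟩

lemma MeasBP.add {f g : G → H} (hf : MeasBP f) (hg : MeasBP g) :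
    MeasBP (fun x => f x + g x) := by
  obtain ⟨B1, e1, h1, hB1, hc1, hbp1⟩ := hf
  obtain ⟨B2, e2, h2, hB2, hc2, hbp2⟩ := hg
  refine ⟨fun x => B1 x + B2 x, fun x => e1 x + e2 x, ?_, hB1.add hB2, ?_, ?_⟩
  · funext x; rw [h1, h2]; exact add_add_add_comm _ _ _ _
  · have : Set.range (fun x => e1 x + e2 x) ⊆ Set.image2 (· + ·) (Set.range e1)
        (Set.range e2) := by
      rintro - ⟨x, rfl⟩
      exact Set.mem_image2_of_mem ⟨x, rfl⟩ ⟨x, rfl⟩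
    exact (Set.Countable.image2 hc1 hc2 _).mono this
  · intro v
    have : (fun x => e1 x + e2 x) ⁻¹' {v} =
        ⋃ w ∈ Set.range e1, (e1 ⁻¹' {w}) ∩ (e2 ⁻¹' {v - w}) := by
      ext x
      simp only [Set.mem_preimage, Set.mem_singleton_iff, Set.mem_iUnion, Set.mem_inter_iff,
        Set.mem_range, exists_prop]
      constructor
      · intro h; exact ⟨e1 x, ⟨x, rfl⟩, rfl, by rw [← h]; abel⟩
      · rintro ⟨w, -, rfl, h2⟩; rw [h2]; abel
    rw [this]
    exact BaireMeasurableSet.biUnion hc1 (fun w _ => (hbp1 w).inter (hbp2 (v - w)))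

lemma MeasBP.neg {f : G → H} (hf : MeasBP f) : MeasBP (fun x => -(f x)) := by
  obtain ⟨B, e, h, hB, hc, hbp⟩ := hf
  refine ⟨fun x => -(B x), fun x => -(e x), ?_, hB.neg, ?_, ?_⟩
  · funext x; rw [h]; exact neg_add _ _
  · have : Set.range (fun x => -(e x)) ⊆ (fun h : H => -h) '' (Set.range e) := by
      rintro - ⟨x, rfl⟩; exact ⟨e x, ⟨x, rfl⟩, rfl⟩
    exact (hc.image _).mono this
  · intro v
    have : (fun x => -(e x)) ⁻¹' {v} = e ⁻¹' {-v} := by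
      ext x; simp only [Set.mem_preimage, Set.mem_singleton_iff]
      constructor
      · intro h; rw [← h]; simp
      · intro h; rw [h]; simp
    rw [this]; exact hbp _

lemma MeasBP.comp_openMap {G' : Type*} [TopologicalSpace G'] [AddCommGroup G']
    [IsTopologicalAddGroup G'] [MeasurableSpace G'] [BorelSpace G'] [PolishSpace G']
    {f : G → H} (hf : MeasBP f) {φ : G' → G} (hc : Continuous φ) (ho : IsOpenMap φ) :
    MeasBP (fun x => f (φ x)) := by
  obtain ⟨B, e, h, hB, hcnt, hbp⟩ := hf
  refine ⟨fun x => B (φ x), fun x => e (φ x), ?_, hB.comp hc.measurable, ?_, ?_⟩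
  · funext x; rw [h]
  · exact hcnt.mono (by rintro - ⟨x, rfl⟩; exact ⟨φ x, rfl⟩)
  · intro v
    exact (hbp v).preimage hc ho

/-- Composition with `x ↦ x - r x` for a locally constant selection `r`. -/
lemma MeasBP.comp_pattern {f : G → H} (hf : MeasBP f) (r : G → G)
    (hrc : (Set.range r).Countable) (hro : ∀ ρ, IsOpen (r ⁻¹' {ρ})) :
    MeasBP (fun x => f (x - r x)) := by
  obtain ⟨B, e, h, hB, hcnt, hbp⟩ := hf
  have hmeas : ∀ T : Set H, (∀ ρ, MeasurableSet ((fun x : G => B (x - ρ)) ⁻¹' T)) →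
      MeasurableSet ((fun x => B (x - r x)) ⁻¹' T) := by
    intro T hT
    have : (fun x => B (x - r x)) ⁻¹' T =
        ⋃ ρ ∈ Set.range r, (r ⁻¹' {ρ}) ∩ ((fun x : G => B (x - ρ)) ⁻¹' T) := by
      ext x
      simp only [Set.mem_preimage, Set.mem_iUnion, Set.mem_inter_iff, Set.mem_singleton_iff,
        exists_prop]
      constructor
      · intro hx; exact ⟨r x, ⟨x, rfl⟩, rfl, hx⟩
      · rintro ⟨ρ, -, rfl, hx⟩; exact hx
    rw [this]
    exact MeasurableSet.biUnion hrc
      (fun ρ _ => ((hro ρ).measurableSet).inter (hT ρ))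
  refine ⟨fun x => B (x - r x), fun x => e (x - r x), ?_, ?_, ?_, ?_⟩
  · funext x; rw [h]
  · intro T hT
    exact hmeas T (fun ρ => (hB.comp (measurable_id.sub measurable_const)) hT)
  · exact hcnt.mono (by rintro - ⟨x, rfl⟩; exact ⟨x - r x, rfl⟩)
  · intro v
    have : (fun x => e (x - r x)) ⁻¹' {v} =
        ⋃ ρ ∈ Set.range r, (r ⁻¹' {ρ}) ∩ ((fun x : G => x - ρ) ⁻¹' (e ⁻¹' {v})) := by
      ext x
      simp only [Set.mem_preimage, Set.mem_iUnion, Set.mem_inter_iff, Set.mem_singleton_iff,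
        exists_prop]
      constructor
      · intro hx; exact ⟨r x, ⟨x, rfl⟩, rfl, hx⟩
      · rintro ⟨ρ, -, rfl, hx⟩; exact hx
    rw [this]
    refine BaireMeasurableSet.biUnion hrc (fun ρ _ => ((hro ρ).baireMeasurableSet).inter ?_)
    exact (hbp v).preimage (continuous_id.sub continuous_const)
      (Homeomorph.subRight ρ).isOpenMap

lemma MeasBP.preimage {f : G → H} (hf : MeasBP f) {S : Set H} (hS : MeasurableSet S) :
    BaireMeasurableSet (f ⁻¹' S) := by
  obtain ⟨B, e, h, hB, hcnt, hbp⟩ := hf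
  have : f ⁻¹' S = ⋃ v ∈ Set.range e, (e ⁻¹' {v}) ∩ (B ⁻¹' {h : H | h + v ∈ S}) := by
    ext x
    simp only [Set.mem_preimage, Set.mem_iUnion, Set.mem_inter_iff, Set.mem_singleton_iff,
      Set.mem_setOf_eq, exists_prop, h]
    constructor
    · intro hx; exact ⟨e x, ⟨x, rfl⟩, rfl, hx⟩
    · rintro ⟨v, -, rfl, hx⟩; exact hx
  rw [this]
  refine BaireMeasurableSet.biUnion hcnt (fun v _ => (hbp v).inter ?_)
  have : MeasurableSet {h : H | h + v ∈ S} := (measurable_add_const v) hS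
  exact (hB this).baireMeasurableSet

/-- The addition map on a product is an open map. -/
lemma isOpenMap_addPair : IsOpenMap (fun p : G × G => p.1 + p.2) := by
  have hshear : IsOpenMap (fun p : G × G => (p.1, p.1 + p.2)) := by
    have : (fun p : G × G => (p.1, p.1 + p.2)) =
        (Homeomorph.mk ⟨fun p : G × G => (p.1, p.1 + p.2),
          fun p : G × G => (p.1, p.2 - p.1),
          fun p => by simp, fun p => by simp⟩
          (continuous_fst.prodMk (continuous_fst.add continuous_snd))
          (continuous_fst.prodMk (continuous_snd.sub continuous_fst)) : G × G ≃ₜ G × G) :=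
      rfl
    rw [this]
    exact Homeomorph.isOpenMap _
  have : (fun p : G × G => p.1 + p.2) = Prod.snd ∘ (fun p : G × G => (p.1, p.1 + p.2)) := rfl
  rw [this]
  exact isOpenMap_snd.comp hshear

/-- The cocycle of a `MeasBP` function is `MeasBP` on the product. -/
lemma MeasBP.cocycle {f : G → H} (hf : MeasBP f) :
    MeasBP (fun p : G × G => f (p.1 + p.2) - f p.1 - f p.2) := by
  have h1 : MeasBP (fun p : G × G => f (p.1 + p.2)) :=
    hf.comp_openMap continuous_add isOpenMap_addPair
  have h2 : MeasBP (fun p : G × G => f p.1) :=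
    hf.comp_openMap continuous_fst isOpenMap_fst
  have h3 : MeasBP (fun p : G × G => f p.2) :=
    hf.comp_openMap continuous_snd isOpenMap_snd
  have := (h1.add h2.neg).add h3.neg
  convert this using 2 with p
  abel

end Helpers

section Helpers2
set_option linter.unusedSectionVars false

variable {G : Type*} [TopologicalSpace G] [AddCommGroup G] [IsTopologicalAddGroup G]
  [MeasurableSpace G] [BorelSpace G] [PolishSpace G]
variable {H : Type*} [TopologicalSpace H] [AddCommGroup H] [IsTopologicalAddGroup H]
  [MeasurableSpace H] [BorelSpace H] [PolishSpace H]

lemma countable_quotient_of_isOpen (N : AddSubgroup G) (h : IsOpen (N : Set G)) :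
    Countable (G ⧸ N) := by
  obtain ⟨D, hDc, hDd⟩ := TopologicalSpace.exists_countable_dense G
  rw [← Set.countable_univ_iff]
  have huniv : (Set.univ : Set (G ⧸ N)) = QuotientAddGroup.mk '' D := by
    refine Set.eq_of_subset_of_subset ?_ (Set.subset_univ _)
    rintro q -
    obtain ⟨z, rfl⟩ := QuotientAddGroup.mk_surjective q
    have hco : IsOpen ((fun y => -z + y) ⁻¹' (N : Set G)) :=
      h.preimage (continuous_const.add continuous_id)
    obtain ⟨d, hd1, hd2⟩ := hDd.inter_open_nonempty _ hco
      ⟨z, by simpa using N.zero_mem⟩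
    exact ⟨d, hd2, ((QuotientAddGroup.eq).2 hd1).symm⟩
  rw [huniv]
  exact hDc.image _

lemma isOpen_preimage_mk (N : AddSubgroup G) (h : IsOpen (N : Set G))
    (T : Set (G ⧸ N)) : IsOpen ((QuotientAddGroup.mk : G → G ⧸ N) ⁻¹' T) := by
  rw [isOpen_iff_mem_nhds]
  intro x hx
  have hco : IsOpen {y : G | y - x ∈ N} :=
    h.preimage (continuous_id.sub continuous_const)
  refine Filter.mem_of_superset (hco.mem_nhds (by simpa using N.zero_mem)) ?_
  intro y hy
  have : (y : G ⧸ N) = (x : G ⧸ N) := by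
    rw [QuotientAddGroup.eq]
    have : y - x ∈ N := hy
    have := N.neg_mem this
    rwa [neg_sub, ← neg_add_eq_sub] at this
  show (y : G ⧸ N) ∈ T
  rw [this]
  exact hx

/-- Continuity points of a `MeasBP` function on a residual set. -/
lemma MeasBP.exists_residual_cont {f : G → H} (hf : MeasBP f) :
    ∃ D : Set G, D ∈ residual G ∧ ∀ x ∈ D, ∀ O : Set H, IsOpen O → f x ∈ O →
      ∃ Vo : Set G, IsOpen Vo ∧ x ∈ Vo ∧ ∀ y ∈ Vo ∩ D, f y ∈ O := by
  have hBc : (TopologicalSpace.countableBasis H).Countable :=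
    TopologicalSpace.countable_countableBasis H
  have hB : TopologicalSpace.IsTopologicalBasis (TopologicalSpace.countableBasis H) :=
    TopologicalSpace.isBasis_countableBasis H
  have hchoice : ∀ t : TopologicalSpace.countableBasis H,
      ∃ u : Set G, IsOpen u ∧ f ⁻¹' (t : Set H) =ᵇ u :=
    fun t => (hf.preimage (hB.isOpen t.2).measurableSet).residualEq_isOpen
  choose u huo hu using hchoice
  haveI : Countable (TopologicalSpace.countableBasis H) := hBc.to_subtype
  set D : Set G := ⋂ t : TopologicalSpace.countableBasis H,
    {x : G | x ∈ f ⁻¹' (t : Set H) ↔ x ∈ u t} with hD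
  have hDres : D ∈ residual G := by
    refine countable_iInter_mem.2 fun t => ?_
    have := hu t
    rw [Filter.eventuallyEq_set] at this
    exact this
  refine ⟨D, hDres, ?_⟩
  intro x hx O hO hfO
  obtain ⟨t, htB, hft, htO⟩ := hB.exists_subset_of_mem_open hfO hO
  have hxt : x ∈ u ⟨t, htB⟩ := by
    have hiff := Set.mem_iInter.1 hx ⟨t, htB⟩
    exact hiff.1 hft
  refine ⟨u ⟨t, htB⟩, huo _, hxt, ?_⟩
  intro y hy
  have hiff := Set.mem_iInter.1 hy.2 ⟨t, htB⟩
  exact htO (hiff.2 hy.1)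

end Helpers2

section Stage
set_option linter.unusedSectionVars false
set_option maxHeartbeats 1000000

variable {G : Type*} [TopologicalSpace G] [AddCommGroup G] [IsTopologicalAddGroup G]
  [MeasurableSpace G] [BorelSpace G] [PolishSpace G]
variable {H : Type*} [TopologicalSpace H] [AddCommGroup H] [IsTopologicalAddGroup H]
  [MeasurableSpace H] [BorelSpace H] [PolishSpace H]

lemma stage
    (hGna : ∀ U ∈ nhds (0 : G), ∃ S : AddSubgroup G, IsOpen (S : Set G) ∧ (S : Set G) ⊆ U)
    (M Mbig M' : AddSubgroup H)
    (hM'meas : MeasurableSet (M' : Set H))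
    (hM'big : M' ≤ Mbig) (hbigM : Mbig ≤ M)
    (R : ℕ → H) (hRM : ∀ i, R i ∈ M) (hR : ∀ h ∈ M, ∃ i, h - R i ∈ M')
    (V : AddSubgroup G) (hVopen : IsOpen (V : Set G))
    (f : G → H) (hmeas : MeasBP f) (hf0 : f 0 = 0)
    (hcocM : ∀ x y : G, f (x + y) - f x - f y ∈ M)
    (hI2 : ∀ x : G, ∀ u ∈ V, f (x + u) - f x - f u ∈ Mbig)
    (Unhd : Set H) (hUnhd : Unhd ∈ nhds (0 : H)) :
    ∃ (S : AddSubgroup G) (g : G → H),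
      IsOpen (S : Set G) ∧ S ≤ V ∧ MeasBP g ∧ g 0 = 0 ∧
      (∀ x, g x - f x ∈ Mbig) ∧
      (∀ x : G, ∀ u ∈ S, g (x + u) - g x - g u ∈ M') ∧
      (∀ u ∈ S, ∃ m ∈ M', g u - m ∈ Unhd) := by
  classical
  haveI : BaireSpace G := polish_baire G
  haveI : BaireSpace (G × G) := polish_baire (G × G)
  -- the cocycle
  set c : G × G → H := fun p => f (p.1 + p.2) - f p.1 - f p.2 with hc
  have hcbp : MeasBP c := hmeas.cocycle
  have hcsym : ∀ x y : G, c (x, y) = c (y, x) := by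
    intro x y
    simp only [hc]
    rw [add_comm x y, sub_right_comm]
  have hcid : ∀ p q r : G, c (p, q) + c (p + q, r) = c (p, q + r) + c (q, r) := by
    intro p q r
    simp only [hc]
    rw [add_assoc]
    abel
  have hcV : ∀ (x : G), ∀ u ∈ V, c (x, u) ∈ Mbig := fun x u hu => hI2 x u hu
  -- Step 1: find a box on which `c` is comeagerly constant mod `M'`
  have hstep1 : ∃ (a b : G) (W : AddSubgroup G) (i₀ : ℕ), IsOpen (W : Set G) ∧ W ≤ V ∧
      a ∈ V ∧ b ∈ V ∧
      IsMeagre (({α : G | α - a ∈ W} ×ˢ {β : G | β - b ∈ W}) \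
        {p : G × G | c p - R i₀ ∈ M'}) := by
    set A : ℕ → Set (G × G) := fun i =>
      ((V : Set G) ×ˢ (V : Set G)) ∩ {p : G × G | c p - R i ∈ M'} with hA
    have hAbp : ∀ i, BaireMeasurableSet (A i) := by
      intro i
      refine ((hVopen.prod hVopen).baireMeasurableSet).inter ?_
      have heq : {p : G × G | c p - R i ∈ M'} =
          c ⁻¹' ((fun h => h - R i) ⁻¹' (M' : Set H)) := rfl
      rw [heq]
      exact hcbp.preimage ((measurable_sub_const (R i)) hM'meas)
    have hcover : ((V : Set G) ×ˢ (V : Set G)) ⊆ ⋃ i, A i := by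
      rintro ⟨x, y⟩ hp
      obtain ⟨i, hi⟩ := hR _ (hcocM x y)
      exact Set.mem_iUnion.2 ⟨i, hp, hi⟩
    have hnm : ∃ i, ¬ IsMeagre (A i) := by
      by_contra hcon
      push_neg at hcon
      have hm : IsMeagre ((V : Set G) ×ˢ (V : Set G)) := (isMeagre_iUnion hcon).mono hcover
      exact not_meager_of_open (hVopen.prod hVopen)
        ⟨(0, 0), by exact ⟨V.zero_mem, V.zero_mem⟩⟩ hm
    obtain ⟨i₀, hi₀⟩ := hnm
    obtain ⟨O, hOopen, hOne, hOA, hAO⟩ := bp_exists_open (hAbp i₀) hi₀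
    have hABO : ¬ IsMeagre (A i₀ ∩ O) := by
      intro hmea
      apply hi₀
      refine (union_meagre hmea hAO).mono ?_
      intro p hp
      by_cases hpO : p ∈ O
      · exact Or.inl ⟨hp, hpO⟩
      · exact Or.inr ⟨hp, hpO⟩
    have hne : (A i₀ ∩ O).Nonempty := by
      by_contra h
      rw [Set.not_nonempty_iff_eq_empty] at h
      exact hABO (h ▸ IsMeagre.empty)
    obtain ⟨⟨a, b⟩, hab⟩ := hne
    have habA : (a, b) ∈ A i₀ := hab.1
    have haV : a ∈ V := habA.1.1
    have hbV : b ∈ V := habA.1.2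
    have hO' : IsOpen (O ∩ (V : Set G) ×ˢ (V : Set G)) := hOopen.inter (hVopen.prod hVopen)
    have habO' : (a, b) ∈ O ∩ (V : Set G) ×ˢ (V : Set G) := ⟨hab.2, habA.1⟩
    obtain ⟨u, v, huo, hvo, hau, hbv, huv⟩ := isOpen_prod_iff.1 hO' a b habO'
    have hu0 : (fun w => a + w) ⁻¹' u ∈ nhds (0 : G) := by
      have hctu : Continuous (fun w : G => a + w) := continuous_const.add continuous_id
      have := hctu.tendsto (0 : G)
      rw [add_zero] at this
      exact this (huo.mem_nhds hau)
    have hv0 : (fun w => b + w) ⁻¹' v ∈ nhds (0 : G) := by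
      have hctv : Continuous (fun w : G => b + w) := continuous_const.add continuous_id
      have := hctv.tendsto (0 : G)
      rw [add_zero] at this
      exact this (hvo.mem_nhds hbv)
    obtain ⟨S1, hS1o, hS1⟩ := hGna _ hu0
    obtain ⟨S2, hS2o, hS2⟩ := hGna _ hv0
    refine ⟨a, b, S1 ⊓ S2 ⊓ V, i₀, ?_, inf_le_right, haV, hbV, ?_⟩
    · have heq : ((S1 ⊓ S2 ⊓ V : AddSubgroup G) : Set G) =
          ((S1 : Set G) ∩ (S2 : Set G)) ∩ (V : Set G) := rfl
      rw [heq]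
      exact (hS1o.inter hS2o).inter hVopen
    · refine hOA.mono ?_
      rintro ⟨α, β⟩ ⟨hmem, hnmem⟩
      simp only [Set.mem_prod, Set.mem_setOf_eq] at hmem
      have hαW : α - a ∈ S1 ⊓ S2 ⊓ V := hmem.1
      have hβW : β - b ∈ S1 ⊓ S2 ⊓ V := hmem.2
      have hαu : α ∈ u := by
        have := hS1 hαW.1.1
        simpa using this
      have hβv : β ∈ v := by
        have := hS2 hβW.1.2
        simpa using this
      have hprod : (α, β) ∈ O ∩ (V : Set G) ×ˢ (V : Set G) := huv ⟨hαu, hβv⟩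
      refine ⟨hprod.1, ?_⟩
      intro hcon
      exact hnmem (hcon.2)
  obtain ⟨a, b, W, i₀, hWopen, hWV, haV, hbV, hbox⟩ := hstep1
  set Ca : Set G := {α : G | α - a ∈ W} with hCa
  set Cb : Set G := {β : G | β - b ∈ W} with hCb
  have hCaopen : IsOpen Ca := hWopen.preimage (continuous_id.sub continuous_const)
  have hCbopen : IsOpen Cb := hWopen.preimage (continuous_id.sub continuous_const)
  have haCa : a ∈ Ca := by simp only [hCa, Set.mem_setOf_eq, sub_self]; exact W.zero_mem
  have hbCb : b ∈ Cb := by simp only [hCb, Set.mem_setOf_eq, sub_self]; exact W.zero_mem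
  -- Step 2: generic values
  set P : G → ℕ → Prop := fun x i => IsMeagre (Cb \ {β : G | c (x, β) - R i ∈ M'}) with hP
  have hstep2 : ∀ x ∈ W, ∃ i, P x i ∧ R i ∈ Mbig := by
    intro x hxW
    set E : Set (G × G) := (Ca ×ˢ Cb) \ {p : G × G | c p - R i₀ ∈ M'} with hE
    have hT1 : IsMeagre ((fun p : G × G => (p.1 + x, p.2)) ⁻¹' E) := by
      refine hbox.preimage_of_isOpenMap ?_ ?_
      · exact (continuous_fst.add continuous_const).prodMk continuous_snd
      · exact ((Homeomorph.addRight x).prodCongr (Homeomorph.refl G)).isOpenMap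
    have hT2 : IsMeagre ((fun p : G × G => (p.1, x + p.2)) ⁻¹' E) := by
      refine hbox.preimage_of_isOpenMap ?_ ?_
      · exact continuous_fst.prodMk (continuous_const.add continuous_snd)
      · exact ((Homeomorph.refl G).prodCongr (Homeomorph.addLeft x)).isOpenMap
    set Ebig : Set (G × G) := E ∪ ((fun p : G × G => (p.1 + x, p.2)) ⁻¹' E)
      ∪ ((fun p : G × G => (p.1, x + p.2)) ⁻¹' E) with hEbig
    have hEbigm : IsMeagre Ebig := union_meagre (union_meagre hbox hT1) hT2
    have hsect := meagre_sections hEbigm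
    obtain ⟨α₀, hα₀Ca, hα₀⟩ :=
      (dense_of_mem_residual hsect).inter_open_nonempty Ca hCaopen ⟨a, haCa⟩
    have hα₀m : IsMeagre {β : G | (α₀, β) ∈ Ebig} := hα₀
    have hxV : x ∈ V := hWV hxW
    have hcm : c (α₀, x) ∈ M := hbigM (hcV α₀ x hxV)
    obtain ⟨i, hi⟩ := hR _ hcm
    have hRiM : R i ∈ Mbig := by
      have h1 : R i = c (α₀, x) - (c (α₀, x) - R i) := by abel
      rw [h1]
      exact Mbig.sub_mem (hcV α₀ x hxV) (hM'big hi)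
    refine ⟨i, ?_, hRiM⟩
    refine hα₀m.mono ?_
    rintro β ⟨hβCb, hβbad⟩
    simp only [Set.mem_setOf_eq]
    by_contra hnot
    simp only [hEbig, Set.mem_union, Set.mem_preimage, not_or] at hnot
    obtain ⟨⟨hn1, hn2⟩, hn3⟩ := hnot
    have hα₀xCa : α₀ + x ∈ Ca := by
      show (α₀ + x) - a ∈ W
      have : (α₀ + x) - a = (α₀ - a) + x := by abel
      rw [this]
      exact W.add_mem hα₀Ca hxW
    have hxβCb : x + β ∈ Cb := by
      show (x + β) - b ∈ W
      have : (x + β) - b = (β - b) + x := by abel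
      rw [this]
      exact W.add_mem hβCb hxW
    have hA1 : c (α₀, β) - R i₀ ∈ M' := by
      by_contra hcon
      exact hn1 ⟨⟨hα₀Ca, hβCb⟩, hcon⟩
    have hA2 : c (α₀ + x, β) - R i₀ ∈ M' := by
      by_contra hcon
      exact hn2 ⟨⟨hα₀xCa, hβCb⟩, hcon⟩
    have hA3 : c (α₀, x + β) - R i₀ ∈ M' := by
      by_contra hcon
      exact hn3 ⟨⟨hα₀Ca, hxβCb⟩, hcon⟩
    apply hβbad
    have hidd := hcid α₀ x β
    -- c (x, β) = c (α₀, x) + c (α₀ + x, β) - c (α₀, x + β)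
    have hxb : c (x, β) - R i = (c (α₀, x) - R i) + ((c (α₀ + x, β) - R i₀)
        - (c (α₀, x + β) - R i₀)) := by
      have h5 : c (x, β) = c (α₀, x) + c (α₀ + x, β) - c (α₀, x + β) := by
        rw [eq_sub_iff_add_eq, add_comm (c (x, β))]
        exact hidd.symm
      rw [h5]; abel
    show c (x, β) - R i ∈ M'
    rw [hxb]
    exact M'.add_mem hi (M'.sub_mem hA2 hA3)
  have hQbp : ∀ i, BaireMeasurableSet {x : G | P x i} := by
    intro i
    have hsbp : BaireMeasurableSet {q : G × G | c q - R i ∈ M'} := by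
      have heq : {q : G × G | c q - R i ∈ M'} =
          c ⁻¹' ((fun h => h - R i) ⁻¹' (M' : Set H)) := rfl
      rw [heq]
      exact hcbp.preimage ((measurable_sub_const (R i)) hM'meas)
    exact vaught_bp hsbp hCbopen
  -- the generic-value selection
  set mbar : G → H := fun x =>
    if hx : (x : G) ∈ W ∧ x ≠ 0 then R (Nat.find ⟨_, (hstep2 x hx.1).choose_spec.1⟩) else 0
    with hmbar
  -- basic facts about the selection
  have hm0 : mbar 0 = 0 := by
    simp only [hmbar]
    rw [dif_neg]
    rintro ⟨-, h⟩
    exact h rfl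
  have hmbar_eq : ∀ x, x ∈ W → x ≠ 0 → ∃ hex : ∃ i, P x i,
      mbar x = R (Nat.find hex) := by
    intro x hx hne
    refine ⟨⟨_, (hstep2 x hx).choose_spec.1⟩, ?_⟩
    simp only [hmbar]
    rw [dif_pos ⟨hx, hne⟩]
  have hPm : ∀ x ∈ W, IsMeagre (Cb \ {β : G | c (x, β) - mbar x ∈ M'}) := by
    intro x hx
    rcases eq_or_ne x 0 with rfl | hne
    · have hcb : ∀ β : G, c ((0 : G), β) - mbar 0 = 0 := by
        intro β
        rw [hm0]
        simp only [hc]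
        rw [zero_add, hf0]
        abel
      have hempty : Cb \ {β : G | c ((0 : G), β) - mbar 0 ∈ M'} = ∅ := by
        rw [Set.diff_eq_empty]
        intro β hβ
        simp only [Set.mem_setOf_eq, hcb β]
        exact M'.zero_mem
      rw [hempty]
      exact IsMeagre.empty
    · obtain ⟨hex, heq⟩ := hmbar_eq x hx hne
      rw [heq]
      exact Nat.find_spec hex
  have hmbarMbig : ∀ x, mbar x ∈ Mbig := by
    intro x
    by_cases hx : x ∈ W ∧ x ≠ 0
    · obtain ⟨hex, heq⟩ := hmbar_eq x hx.1 hx.2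
      rw [heq]
      obtain ⟨iw, hiw, hiwM⟩ := hstep2 x hx.1
      have h1 : IsMeagre (Cb \ {β : G | c (x, β) - R (Nat.find hex) ∈ M'}) :=
        Nat.find_spec hex
      obtain ⟨β, hβ⟩ := nonempty_of_meager_compl hCbopen ⟨b, hbCb⟩ h1 hiw
      have hmm : R (Nat.find hex) - R iw ∈ M' := by
        have e1 : c (x, β) - R (Nat.find hex) ∈ M' := hβ.2.1
        have e2 : c (x, β) - R iw ∈ M' := hβ.2.2
        have heq2 : R (Nat.find hex) - R iw
            = (c (x, β) - R iw) - (c (x, β) - R (Nat.find hex)) := by abel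
        rw [heq2]
        exact M'.sub_mem e2 e1
      have heq3 : R (Nat.find hex) = (R (Nat.find hex) - R iw) + R iw := by abel
      rw [heq3]
      exact Mbig.add_mem (hM'big hmm) hiwM
    · simp only [hmbar]
      rw [dif_neg hx]
      exact Mbig.zero_mem
  -- the corrected function f1
  set f1 : G → H := fun x => f x + mbar x with hf1
  have hmbarbp : MeasBP mbar := by
    refine measBP_of_countable ?_ ?_
    · refine ((Set.countable_range R).insert 0).mono ?_
      rintro - ⟨x, rfl⟩
      simp only [hmbar]
      by_cases hx : x ∈ W ∧ x ≠ 0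
      · rw [dif_pos hx]
        exact Set.mem_insert_of_mem _ ⟨_, rfl⟩
      · rw [dif_neg hx]
        exact Set.mem_insert _ _
    · intro v
      have hAreg : IsOpen ((W : Set G) ∩ {x : G | x ≠ 0}) := hWopen.inter isOpen_ne
      have hfib : mbar ⁻¹' {v} =
          ((⋃ i ∈ {i : ℕ | R i = v}, (((W : Set G) ∩ {x : G | x ≠ 0}) ∩
            ({x : G | P x i} ∩ ⋂ j ∈ Finset.range i, {x : G | P x j}ᶜ))) ∪
          (if (0 : H) = v then ((W : Set G) ∩ {x : G | x ≠ 0})ᶜ else ∅)) := by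
        ext x
        simp only [Set.mem_preimage, Set.mem_singleton_iff, Set.mem_union, Set.mem_iUnion,
          Set.mem_inter_iff, Set.mem_setOf_eq, Set.mem_iInter, Set.mem_compl_iff,
          Finset.mem_range, exists_prop, hmbar]
        by_cases hx : x ∈ W ∧ x ≠ 0
        · rw [dif_pos hx]
          have hex : ∃ i, P x i := ⟨_, (hstep2 x hx.1).choose_spec.1⟩
          constructor
          · intro hv
            left
            exact ⟨Nat.find hex, hv, ⟨hx.1, hx.2⟩,
              Nat.find_spec hex, fun j hj => Nat.find_min hex hj⟩
          · rintro (⟨i, hiv, -, hPi, hmin⟩ | helse)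
            · have : Nat.find hex = i := (Nat.find_eq_iff hex).2 ⟨hPi, fun j hj => hmin j hj⟩
              rw [this]
              exact hiv
            · by_cases h0 : (0 : H) = v
              · rw [if_pos h0] at helse
                exact absurd ⟨hx.1, hx.2⟩ helse
              · rw [if_neg h0] at helse
                exact absurd helse (Set.notMem_empty x)
        · rw [dif_neg hx]
          constructor
          · intro hv
            right
            rw [if_pos hv]
            intro hreg
            exact hx ⟨hreg.1, hreg.2⟩
          · rintro (⟨i, hiv, hreg, -, -⟩ | helse)
            · exact absurd hreg hx
            · by_cases h0 : (0 : H) = v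
              · exact h0
              · rw [if_neg h0] at helse
                exact absurd helse (Set.notMem_empty x)
      rw [hfib]
      refine BaireMeasurableSet.union ?_ ?_
      · refine BaireMeasurableSet.biUnion (Set.to_countable _) ?_
        intro i hi
        refine (hAreg.baireMeasurableSet).inter ?_
        refine (hQbp i).inter ?_
        refine BaireMeasurableSet.biInter ((Finset.range i).countable_toSet) ?_
        intro j hj
        exact (hQbp j).compl
      · by_cases h0 : (0 : H) = v
        · rw [if_pos h0]
          exact (hAreg.baireMeasurableSet).compl
        · rw [if_neg h0]
          exact isOpen_empty.baireMeasurableSet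
  have hf1bp : MeasBP f1 := hmeas.add hmbarbp
  have hf10 : f1 0 = 0 := by
    simp only [hf1]
    rw [hf0, hm0, add_zero]
  have hf1f : ∀ x, f1 x - f x ∈ Mbig := by
    intro x
    have heq : f1 x - f x = mbar x := by simp only [hf1]; abel
    rw [heq]
    exact hmbarMbig x
  have hI2f1 : ∀ p q : G, q ∈ V → f1 (p + q) - f1 p - f1 q ∈ Mbig := by
    intro p q hq
    have expand : f1 (p + q) - f1 p - f1 q =
        (f (p + q) - f p - f q) + (mbar (p + q) - mbar p - mbar q) := by
      simp only [hf1]; abel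
    rw [expand]
    exact Mbig.add_mem (hI2 p q hq)
      (Mbig.sub_mem (Mbig.sub_mem (hmbarMbig _) (hmbarMbig _)) (hmbarMbig _))
  -- M'-defect on W × W
  have hc'W : ∀ x ∈ W, ∀ y ∈ W, f1 (x + y) - f1 x - f1 y ∈ M' := by
    intro x hx y hy
    have h2 := hPm y hy
    have h3 := hPm (x + y) (W.add_mem hx hy)
    have h1 := hPm x hx
    have h1' : IsMeagre (Cb \ {β : G | c (x, y + β) - mbar x ∈ M'}) := by
      have hpre : (fun β : G => y + β) ⁻¹' (Cb \ {β : G | c (x, β) - mbar x ∈ M'}) =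
          Cb \ {β : G | c (x, y + β) - mbar x ∈ M'} := by
        ext β
        simp only [Set.mem_preimage, Set.mem_diff, Set.mem_setOf_eq, hCb]
        constructor
        · rintro ⟨hbC, hbad⟩
          refine ⟨?_, hbad⟩
          have heq4 : β - b = ((y + β) - b) - y := by abel
          rw [heq4]
          exact W.sub_mem hbC hy
        · rintro ⟨hbC, hbad⟩
          refine ⟨?_, hbad⟩
          have heq4 : (y + β) - b = (β - b) + y := by abel
          rw [heq4]
          exact W.add_mem hbC hy
      rw [← hpre]
      exact h1.preimage_of_isOpenMap (continuous_const.add continuous_id)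
        (Homeomorph.addLeft y).isOpenMap
    have hcomb : IsMeagre (Cb \ ({β : G | c (y, β) - mbar y ∈ M'} ∩
        ({β : G | c (x + y, β) - mbar (x + y) ∈ M'} ∩
          {β : G | c (x, y + β) - mbar x ∈ M'}))) := by
      refine (union_meagre h2 (union_meagre h3 h1')).mono ?_
      intro β hβ
      rcases hβ with ⟨hβC, hβn⟩
      by_cases e2 : β ∈ {β : G | c (y, β) - mbar y ∈ M'}
      · by_cases e3 : β ∈ {β : G | c (x + y, β) - mbar (x + y) ∈ M'}
        · by_cases e1 : β ∈ {β : G | c (x, y + β) - mbar x ∈ M'}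
          · exact (hβn ⟨e2, e3, e1⟩).elim
          · exact Or.inr (Or.inr ⟨hβC, e1⟩)
        · exact Or.inr (Or.inl ⟨hβC, e3⟩)
      · exact Or.inl ⟨hβC, e2⟩
    obtain ⟨β, hβ⟩ := nonempty_of_meager_compl hCbopen ⟨b, hbCb⟩ hcomb
      (by rw [Set.diff_univ]; exact IsMeagre.empty)
    obtain ⟨hβC, ⟨e2, e3, e1⟩, -⟩ := hβ
    have key : f1 (x + y) - f1 x - f1 y =
        (c (x, y + β) - mbar x) + (c (y, β) - mbar y) - (c (x + y, β) - mbar (x + y)) := by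
      have hidd := hcid x y β
      have h5 : c (x, y + β) = c (x, y) + c (x + y, β) - c (y, β) := by
        rw [eq_sub_iff_add_eq]
        exact hidd.symm
      have expand : f1 (x + y) - f1 x - f1 y =
          c (x, y) + (mbar (x + y) - mbar x - mbar y) := by
        simp only [hf1, hc]; abel
      rw [expand, h5]
      abel
    rw [key]
    exact M'.sub_mem (M'.add_mem e1 e2) e3
  -- Step 5 : value control on a smaller subgroup
  obtain ⟨D, hDres, hDcont⟩ := hf1bp.exists_residual_cont
  have hDdense : Dense D := dense_of_mem_residual hDres
  obtain ⟨z₀, hz₀W, hz₀D⟩ := hDdense.inter_open_nonempty (W : Set G) hWopen ⟨0, W.zero_mem⟩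
  have hsub2 : ∃ Ow : Set H, IsOpen Ow ∧ (0 : H) ∈ Ow ∧
      ∀ h1 ∈ Ow, ∀ h2 ∈ Ow, h1 - h2 ∈ Unhd := by
    have hcont : Continuous (fun q : H × H => q.1 - q.2) := continuous_fst.sub continuous_snd
    have h0 : (fun q : H × H => q.1 - q.2) ⁻¹' Unhd ∈ nhds ((0 : H), (0 : H)) := by
      have ht := hcont.tendsto ((0 : H), (0 : H))
      rw [show (0 : H) - (0 : H) = 0 by abel] at ht
      exact ht hUnhd
    rw [mem_nhds_prod_iff] at h0
    obtain ⟨U1, hU1, U2, hU2, hsub⟩ := h0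
    obtain ⟨O1, hO1sub, hO1open, hO1mem⟩ := mem_nhds_iff.1 (Filter.inter_mem hU1 hU2)
    refine ⟨O1, hO1open, hO1mem, ?_⟩
    intro h1 hh1 h2 hh2
    have hpair : (h1, h2) ∈ U1 ×ˢ U2 := ⟨(hO1sub hh1).1, (hO1sub hh2).2⟩
    exact hsub hpair
  obtain ⟨Ow, hOwopen, hOw0, hOwdiff⟩ := hsub2
  set O : Set H := (fun h => h - f1 z₀) ⁻¹' Ow with hOdef
  have hOopen2 : IsOpen O := hOwopen.preimage (continuous_id.sub continuous_const)
  have hz₀O : f1 z₀ ∈ O := by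
    simp only [hOdef, Set.mem_preimage, sub_self]
    exact hOw0
  obtain ⟨V1, hV1open, hz₀V1, hV1sub⟩ := hDcont z₀ hz₀D O hOopen2 hz₀O
  have hnb : ((fun w => z₀ + w) ⁻¹' V1) ∩ (W : Set G) ∈ nhds (0 : G) := by
    refine Filter.inter_mem ?_ (hWopen.mem_nhds W.zero_mem)
    have hct : Continuous (fun w : G => z₀ + w) := continuous_const.add continuous_id
    have ht := hct.tendsto (0 : G)
    rw [add_zero] at ht
    exact ht (hV1open.mem_nhds hz₀V1)
  obtain ⟨S', hS'open, hS'sub⟩ := hGna _ hnb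
  set Ssub : AddSubgroup G := S' ⊓ W with hSsubdef
  have hSsubopen : IsOpen (Ssub : Set G) := by
    have heq : ((Ssub : AddSubgroup G) : Set G) = (S' : Set G) ∩ (W : Set G) := rfl
    rw [heq]
    exact hS'open.inter hWopen
  have hSsubW : Ssub ≤ W := inf_le_right
  have hSsubV : Ssub ≤ V := le_trans inf_le_right hWV
  have hval : ∀ w ∈ Ssub, ∃ m ∈ M', f1 w - m ∈ Unhd := by
    intro w hw
    have hD2 : (fun w₀ : G => w₀ + w) ⁻¹' D ∈ residual G := by
      have hmape := (Homeomorph.addRight w).residual_map_eq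
      have hDres2 := hDres
      rw [← hmape] at hDres2
      exact Filter.mem_map.1 hDres2
    have hDD : (D ∩ ((fun w₀ : G => w₀ + w) ⁻¹' D)) ∈ residual G :=
      Filter.inter_mem hDres hD2
    have hop : IsOpen {w₀ : G | w₀ - z₀ ∈ Ssub} :=
      hSsubopen.preimage (continuous_id.sub continuous_const)
    obtain ⟨w₀, hw₀S, hw₀D, hw₀Dw⟩ := (dense_of_mem_residual hDD).inter_open_nonempty _ hop
      ⟨z₀, by simp only [Set.mem_setOf_eq, sub_self]; exact Ssub.zero_mem⟩
    have hw₀z : w₀ - z₀ ∈ Ssub := hw₀S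
    have hw₀V1 : w₀ ∈ V1 := by
      have h6 := (hS'sub hw₀z.1).1
      simp only [Set.mem_preimage] at h6
      rwa [show z₀ + (w₀ - z₀) = w₀ by abel] at h6
    have hwwz : (w₀ + w) - z₀ ∈ Ssub := by
      rw [show (w₀ + w) - z₀ = (w₀ - z₀) + w by abel]
      exact Ssub.add_mem hw₀z hw
    have hwwV1 : w₀ + w ∈ V1 := by
      have h6 := (hS'sub hwwz.1).1
      simp only [Set.mem_preimage] at h6
      rwa [show z₀ + ((w₀ + w) - z₀) = w₀ + w by abel] at h6
    have hw₀W : w₀ ∈ W := by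
      rw [show w₀ = z₀ + (w₀ - z₀) by abel]
      exact W.add_mem hz₀W (hSsubW hw₀z)
    have hwW : w ∈ W := hSsubW hw
    have hfw₀ : f1 w₀ ∈ O := hV1sub w₀ ⟨hw₀V1, hw₀D⟩
    have hfww : f1 (w₀ + w) ∈ O := hV1sub _ ⟨hwwV1, hw₀Dw⟩
    refine ⟨-(f1 (w₀ + w) - f1 w₀ - f1 w), M'.neg_mem (hc'W w₀ hw₀W w hwW), ?_⟩
    have heq7 : f1 w - -(f1 (w₀ + w) - f1 w₀ - f1 w) =
        (f1 (w₀ + w) - f1 z₀) - (f1 w₀ - f1 z₀) := by abel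
    rw [heq7]
    exact hOwdiff _ hfww _ hfw₀
  -- Step 6 : globalization via coset representatives
  haveI hQc : Countable (G ⧸ Ssub) := countable_quotient_of_isOpen Ssub hSsubopen
  set aux : G ⧸ Ssub → G := fun q => if q = 0 then 0 else Quotient.out q with haux
  set r : G → G := fun x => aux ((x : G ⧸ Ssub)) with hrdef
  have hmk_out : ∀ q : G ⧸ Ssub, ((aux q : G) : G ⧸ Ssub) = q := by
    intro q
    by_cases h0 : q = 0
    · simp only [haux, if_pos h0, h0]
      rfl
    · simp only [haux, if_neg h0]
      exact Quotient.out_eq q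
  have hr_sub : ∀ x, x - r x ∈ Ssub := by
    intro x
    have h7 : ((r x : G) : G ⧸ Ssub) = ((x : G) : G ⧸ Ssub) := hmk_out _
    have h8 := (QuotientAddGroup.eq).1 h7
    rwa [neg_add_eq_sub] at h8
  have hr_const : ∀ x u, u ∈ Ssub → r (x + u) = r x := by
    intro x u hu
    have h7 : ((x + u : G) : G ⧸ Ssub) = ((x : G) : G ⧸ Ssub) := by
      rw [QuotientAddGroup.eq]
      rw [show -(x + u) + x = -u by abel]
      exact Ssub.neg_mem hu
    simp only [hrdef]
    rw [h7]
  have hr0 : ∀ u ∈ Ssub, r u = 0 := by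
    intro u hu
    have h7 : ((u : G) : G ⧸ Ssub) = 0 := (QuotientAddGroup.eq_zero_iff u).2 hu
    simp only [hrdef]
    rw [h7]
    simp only [haux, if_pos rfl]
  have hr_cnt : (Set.range r).Countable := by
    refine (Set.countable_range aux).mono ?_
    rintro - ⟨x, rfl⟩
    exact ⟨_, rfl⟩
  have hr_fib : ∀ ρ, IsOpen (r ⁻¹' {ρ}) := by
    intro ρ
    have heq8 : r ⁻¹' {ρ} = (QuotientAddGroup.mk : G → G ⧸ Ssub) ⁻¹' (aux ⁻¹' {ρ}) := rfl
    rw [heq8]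
    exact isOpen_preimage_mk Ssub hSsubopen _
  set g : G → H := fun x => f1 (r x) + f1 (x - r x) with hgdef
  have hgbp : MeasBP g := by
    refine MeasBP.add ?_ (hf1bp.comp_pattern r hr_cnt hr_fib)
    refine measBP_of_countable ?_ ?_
    · refine ((hr_cnt.image f1)).mono ?_
      rintro - ⟨x, rfl⟩
      exact ⟨r x, ⟨x, rfl⟩, rfl⟩
    · intro v
      have heq9 : (fun x => f1 (r x)) ⁻¹' {v} =
          ⋃ ρ ∈ Set.range r ∩ {ρ : G | f1 ρ = v}, r ⁻¹' {ρ} := by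
        ext x
        simp only [Set.mem_preimage, Set.mem_singleton_iff, Set.mem_iUnion, Set.mem_inter_iff,
          Set.mem_setOf_eq, Set.mem_range, exists_prop]
        constructor
        · intro hx
          exact ⟨r x, ⟨⟨x, rfl⟩, hx⟩, rfl⟩
        · rintro ⟨ρ, ⟨-, hv⟩, rfl⟩
          exact hv
      rw [heq9]
      refine BaireMeasurableSet.biUnion (hr_cnt.mono Set.inter_subset_left) ?_
      intro ρ _
      exact (hr_fib ρ).baireMeasurableSet
  have hg0 : g 0 = 0 := by
    have h2 : r 0 = 0 := hr0 0 Ssub.zero_mem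
    simp only [hgdef, h2]
    rw [sub_zero, hf10, zero_add]
  have hgf1 : ∀ x, g x - f1 x ∈ Mbig := by
    intro x
    have hxw : x - r x ∈ Ssub := hr_sub x
    have hkey : g x - f1 x = -(f1 (r x + (x - r x)) - f1 (r x) - f1 (x - r x)) := by
      rw [show r x + (x - r x) = x by abel]
      simp only [hgdef]
      abel
    rw [hkey]
    exact Mbig.neg_mem (hI2f1 (r x) (x - r x) (hSsubV hxw))
  have hgf : ∀ x, g x - f x ∈ Mbig := by
    intro x
    rw [show g x - f x = (g x - f1 x) + (f1 x - f x) by abel]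
    exact Mbig.add_mem (hgf1 x) (hf1f x)
  have hgI2 : ∀ x : G, ∀ u ∈ Ssub, g (x + u) - g x - g u ∈ M' := by
    intro x u hu
    have h1 : r (x + u) = r x := hr_const x u hu
    have h2 : r u = 0 := hr0 u hu
    have hxw : x - r x ∈ Ssub := hr_sub x
    have key : g (x + u) - g x - g u = f1 ((x - r x) + u) - f1 (x - r x) - f1 u := by
      simp only [hgdef, h1, h2]
      rw [show x + u - r x = (x - r x) + u by abel, sub_zero, hf10]
      abel
    rw [key]
    exact hc'W _ (hSsubW hxw) _ (hSsubW hu)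
  have hgval : ∀ u ∈ Ssub, ∃ m ∈ M', g u - m ∈ Unhd := by
    intro u hu
    have h2 : r u = 0 := hr0 u hu
    have heq10 : g u = f1 u := by
      simp only [hgdef, h2]
      rw [sub_zero, hf10, zero_add]
    rw [heq10]
    exact hval u hu
  exact ⟨Ssub, g, hSsubopen, hSsubV, hgbp, hg0, hgf, hgI2, hgval⟩

end Stage

set_option maxHeartbeats 1000000 in
/-- Every Borel lift of a homomorphism from a non-Archimedean abelian Polish group `G` into a
quotient `Ĥ/M` by a non-Archimedean Polishable subgroup with a suitable basis of subgroups can be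
replaced by a continuous lift which is an "asymptotic homomorphism" (Lemma 7.2 of the paper). -/
theorem statement8
    {G H : Type*}
    [TopologicalSpace G] [AddCommGroup G] [IsTopologicalAddGroup G] [PolishSpace G]
    [MeasurableSpace G] [BorelSpace G]
    -- `G` is non-Archimedean:
    (hGna : ∀ U ∈ nhds (0 : G), ∃ S : AddSubgroup G, IsOpen (S : Set G) ∧ (S : Set G) ⊆ U)
    [TopologicalSpace H] [AddCommGroup H] [IsTopologicalAddGroup H] [PolishSpace H]
    [MeasurableSpace H] [BorelSpace H]
    -- `M` is a non-Archimedean Polishable subgroup of `H`, with Polish group topology `τ`: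
    (M : AddSubgroup H) (τ : TopologicalSpace M)
    (hPol : @PolishSpace M τ) (hTG : @IsTopologicalAddGroup M τ _)
    (hBorel : ∀ U : Set M, τ.IsOpen U → MeasurableSet (Subtype.val '' U))
    (hna : ∀ U ∈ @nhds M τ 0, ∃ S : AddSubgroup M, τ.IsOpen (S : Set M) ∧ (S : Set M) ⊆ U)
    -- `F` is a Borel lift of a homomorphism `G → H/M`:
    (F : G → H) (hF : Measurable F)
    (hcoc : ∀ x y : G, F (x + y) - F x - F y ∈ M)
    -- `(Hk)` is a decreasing neighborhood basis of `0` in `H` with `Hk 0 = H`: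
    (Hk : ℕ → Set H) (hHk0 : Hk 0 = Set.univ)
    (hHkdec : ∀ k, Hk (k + 1) ⊆ Hk k)
    (hHknhds : ∀ k, Hk k ∈ nhds (0 : H))
    (hHkbasis : ∀ U ∈ nhds (0 : H), ∃ k, Hk k ⊆ U)
    -- `(Mk)` is a decreasing neighborhood basis of `0` in `M` consisting of subgroups, with
    -- `Mk 0 = M` and `Mk k = cl_H(Mk k) ∩ M ⊆ Hk k`:
    (Mk : ℕ → AddSubgroup H) (hMk0 : Mk 0 = M) (hMkle : ∀ k, Mk k ≤ M)
    (hMkdec : ∀ k, Mk (k + 1) ≤ Mk k)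
    (hMknhds : ∀ k, {m : M | (m : H) ∈ Mk k} ∈ @nhds M τ 0)
    (hMkbasis : ∀ U ∈ @nhds M τ 0, ∃ k, {m : M | (m : H) ∈ Mk k} ⊆ U)
    (hMkcl : ∀ k, (Mk k : Set H) = closure (Mk k : Set H) ∩ (M : Set H))
    (hMkHk : ∀ k, (Mk k : Set H) ⊆ Hk k) :
    ∃ (Gk : ℕ → AddSubgroup G) (g : G → H),
      Gk 0 = ⊤ ∧
      (∀ k, Gk (k + 1) ≤ Gk k) ∧
      (∀ k, (Gk k : Set G) ∈ nhds (0 : G)) ∧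
      (∀ U ∈ nhds (0 : G), ∃ k, (Gk k : Set G) ⊆ U) ∧
      Continuous g ∧
      (∀ x : G, g x - F x ∈ M) ∧
      (∀ k, ∀ x ∈ Gk k, ∀ y ∈ Gk k, g (x + y) - g x - g y ∈ Mk k) ∧
      (∀ k, ∀ x ∈ Gk k, g x ∈ Hk k) := by
  classical
  -- measurability of M and the Mk
  have hMmeas : MeasurableSet (M : Set H) := by
    have h1 := hBorel Set.univ τ.isOpen_univ
    rwa [Set.image_univ, Subtype.range_coe] at h1
  have hMkmeas : ∀ k, MeasurableSet (Mk k : Set H) := by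
    intro k
    rw [hMkcl k]
    exact isClosed_closure.measurableSet.inter hMmeas
  have hF0mem : F 0 ∈ M := by
    have h := hcoc 0 0
    rw [add_zero] at h
    have h2 : F 0 - F 0 - F 0 = -(F 0) := by abel
    rw [h2] at h
    simpa using M.neg_mem h
  -- monotone families
  have hMkmono : ∀ {i j : ℕ}, i ≤ j → Mk j ≤ Mk i := by
    intro i j hij
    induction j with
    | zero => rw [Nat.le_zero.1 hij]
    | succ j ih =>
      rcases Nat.le_succ_iff.1 hij with h | h
      · exact le_trans (hMkdec j) (ih h)
      · rw [h]
  have hHkmono : ∀ {i j : ℕ}, i ≤ j → Hk j ⊆ Hk i := by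
    intro i j hij
    induction j with
    | zero => rw [Nat.le_zero.1 hij]
    | succ j ih =>
      rcases Nat.le_succ_iff.1 hij with h | h
      · exact (hHkdec j).trans (ih h)
      · rw [h]
  -- countable dense reps of M mod Mk (k+1)
  have hsep : ∃ R : ℕ → H, (∀ i, R i ∈ M) ∧ ∀ k, ∀ h ∈ M, ∃ i, h - R i ∈ Mk (k + 1) := by
    letI := τ
    haveI := hPol
    haveI := hTG
    haveI : Nonempty (↥M) := ⟨0⟩
    obtain ⟨D, hDc, hDd⟩ := TopologicalSpace.exists_countable_dense (↥M)
    obtain ⟨d, hd⟩ := hDc.exists_eq_range hDd.nonempty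
    refine ⟨fun i => ((d i : ↥M) : H), fun i => (d i).2, ?_⟩
    intro k h hh
    set N' : AddSubgroup (↥M) := (Mk (k + 1)).comap M.subtype with hN'
    have hN'nhds : (N' : Set (↥M)) ∈ nhds (0 : ↥M) := hMknhds (k + 1)
    have hN'open : IsOpen (N' : Set (↥M)) := N'.isOpen_of_mem_nhds hN'nhds
    have hTopen : IsOpen ((fun m : ↥M => (⟨h, hh⟩ : ↥M) - m) ⁻¹' (N' : Set (↥M))) :=
      hN'open.preimage (continuous_const.sub continuous_id)
    obtain ⟨d', hd'1, hd'2⟩ := hDd.inter_open_nonempty _ hTopen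
      ⟨⟨h, hh⟩, by simp only [Set.mem_preimage, sub_self]; exact N'.zero_mem⟩
    rw [hd] at hd'2
    obtain ⟨i, rfl⟩ := hd'2
    refine ⟨i, ?_⟩
    exact hd'1
  obtain ⟨R, hRM, hRcover⟩ := hsep
  -- base neighborhoods in G
  obtain ⟨U0, hU0⟩ := (nhds (0 : G)).exists_antitone_basis
  -- the base function
  set F0 : G → H := fun x => F x - F 0 with hF0def
  -- the invariant
  set Good : ℕ → AddSubgroup G → (G → H) → Prop := fun k Vk fk =>
    IsOpen (Vk : Set G) ∧ MeasBP fk ∧ fk 0 = 0 ∧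
    (∀ x y : G, fk (x + y) - fk x - fk y ∈ M) ∧
    (∀ x : G, ∀ u ∈ Vk, fk (x + u) - fk x - fk u ∈ Mk k) ∧
    (∀ u ∈ Vk, ∃ m ∈ Mk k, fk u - m ∈ Hk k) with hGooddef
  have hcocF0 : ∀ x y : G, F0 (x + y) - F0 x - F0 y ∈ M := by
    intro x y
    have heq : F0 (x + y) - F0 x - F0 y = (F (x + y) - F x - F y) + F 0 := by
      simp only [hF0def]; abel
    rw [heq]
    exact M.add_mem (hcoc x y) hF0mem
  have hbase : Good 0 ⊤ F0 := by
    refine ⟨by simp, (hF.sub measurable_const).measBP, by simp only [hF0def, sub_self], hcocF0,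
      ?_, ?_⟩
    · intro x u _
      rw [hMk0]
      exact hcocF0 x u
    · intro u _
      refine ⟨0, ?_, ?_⟩
      · rw [hMk0]; exact M.zero_mem
      · rw [hHk0]; exact Set.mem_univ _
  have hstep : ∀ k (Vk : AddSubgroup G) (fk : G → H), Good k Vk fk →
      ∃ (V' : AddSubgroup G) (gk : G → H), Good (k + 1) V' gk ∧ V' ≤ Vk ∧
        (V' : Set G) ⊆ U0 (k + 1) ∧ ∀ x, gk x - fk x ∈ Mk k := by
    intro k Vk fk hGk
    obtain ⟨hVopen, hmeas, hf0, hcocM, hI2, -⟩ := hGk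
    obtain ⟨S, gk, hSopen, hSV, hgbp, hg0, hgf, hgI2, hgval⟩ :=
      stage hGna M (Mk k) (Mk (k + 1)) (hMkmeas (k + 1)) (hMkdec k) (hMkle k)
        R hRM (hRcover k) Vk hVopen fk hmeas hf0 hcocM hI2 (Hk (k + 1)) (hHknhds (k + 1))
    obtain ⟨SU, hSUopen, hSUsub⟩ := hGna (U0 (k + 1)) (hU0.mem (k + 1))
    refine ⟨S ⊓ SU, gk, ⟨?_, hgbp, hg0, ?_, ?_, ?_⟩, le_trans inf_le_left hSV, ?_, hgf⟩
    · have heq : ((S ⊓ SU : AddSubgroup G) : Set G) = (S : Set G) ∩ (SU : Set G) := rfl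
      rw [heq]
      exact hSopen.inter hSUopen
    · intro x y
      have heq : gk (x + y) - gk x - gk y = (fk (x + y) - fk x - fk y) +
          ((gk (x + y) - fk (x + y)) - (gk x - fk x) - (gk y - fk y)) := by abel
      rw [heq]
      refine M.add_mem (hcocM x y) ?_
      exact M.sub_mem (M.sub_mem (hMkle k (hgf _)) (hMkle k (hgf _))) (hMkle k (hgf _))
    · intro x u hu
      exact hgI2 x u hu.1
    · intro u hu
      obtain ⟨m, hm1, hm2⟩ := hgval u hu.1
      exact ⟨m, hm1, hm2⟩
    · intro x hx
      exact hSUsub hx.2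
  -- the chain
  let chain : ∀ k : ℕ, {p : AddSubgroup G × (G → H) // Good k p.1 p.2} :=
    fun k => Nat.rec (⟨(⊤, F0), hbase⟩ : {p : AddSubgroup G × (G → H) // Good 0 p.1 p.2})
      (fun k ih => ⟨((hstep k ih.1.1 ih.1.2 ih.2).choose,
        (hstep k ih.1.1 ih.1.2 ih.2).choose_spec.choose),
        (hstep k ih.1.1 ih.1.2 ih.2).choose_spec.choose_spec.1⟩) k
  set Vs : ℕ → AddSubgroup G := fun k => (chain k).1.1 with hVsdef
  set fs : ℕ → G → H := fun k => (chain k).1.2 with hfsdef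
  have hchain0 : Vs 0 = ⊤ ∧ fs 0 = F0 := ⟨rfl, rfl⟩
  have hlink : ∀ k, Vs (k + 1) ≤ Vs k ∧ ((Vs (k + 1) : Set G) ⊆ U0 (k + 1)) ∧
      ∀ x, fs (k + 1) x - fs k x ∈ Mk k := by
    intro k
    have h := (hstep k (chain k).1.1 (chain k).1.2 (chain k).2).choose_spec.choose_spec
    exact ⟨h.2.1, h.2.2.1, h.2.2.2⟩
  have hGoodk : ∀ k, Good k (Vs k) (fs k) := fun k => (chain k).2
  have hVsmono : ∀ {i j : ℕ}, i ≤ j → Vs j ≤ Vs i := by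
    intro i j hij
    induction j with
    | zero => rw [Nat.le_zero.1 hij]
    | succ j ih =>
      rcases Nat.le_succ_iff.1 hij with h | h
      · exact le_trans (hlink j).1 (ih h)
      · rw [h]
  have hfsdiff : ∀ (x : G) (n m : ℕ), n ≤ m → fs m x - fs n x ∈ Mk n := by
    intro x n m hnm
    induction m with
    | zero =>
      rw [Nat.le_zero.1 hnm]
      simpa using (Mk 0).zero_mem
    | succ m ih =>
      rcases Nat.le_succ_iff.1 hnm with h | h
      · have heq : fs (m + 1) x - fs n x = (fs (m + 1) x - fs m x) + (fs m x - fs n x) := by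
          abel
        rw [heq]
        exact (Mk n).add_mem (hMkmono h ((hlink m).2.2 x)) (ih h)
      · rw [h]
        simpa using (Mk (m + 1)).zero_mem
  -- the limit function
  have hlim : ∀ x : G, ∃ mm : ↥M, ∀ n, ((mm : H) - (fs n x - fs 0 x)) ∈ Mk n := by
    intro x
    have hdiffM : ∀ n, fs n x - fs 0 x ∈ M := by
      intro n
      have := hfsdiff x 0 n (Nat.zero_le n)
      rw [hMk0] at this
      exact this
    have key := @nonarch_polish_limit (↥M) τ _ hTG hPol
      (fun n => (Mk n).comap M.subtype)
      (fun n => AddSubgroup.isOpen_of_mem_nhds _ (hMknhds n))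
      (fun U hU => hMkbasis U hU)
      (fun n => ⟨fs n x - fs 0 x, hdiffM n⟩)
      (by
        intro m n hmn
        show ((⟨fs n x - fs 0 x, hdiffM n⟩ - ⟨fs m x - fs 0 x, hdiffM m⟩ : ↥M) : H) ∈ Mk m
        rw [AddSubgroup.coe_sub]
        have heq : (fs n x - fs 0 x) - (fs m x - fs 0 x) = fs n x - fs m x := by abel
        rw [heq]
        exact hfsdiff x m n hmn)
    obtain ⟨mm, hmm⟩ := key
    refine ⟨mm, fun n => ?_⟩
    exact hmm n
  choose mmf hmmf using hlim
  set g : G → H := fun x => fs 0 x + ((mmf x : H)) with hgdef2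
  have hgt : ∀ (x : G) (n : ℕ), g x - fs n x ∈ Mk n := by
    intro x n
    have heq : g x - fs n x = (mmf x : H) - (fs n x - fs 0 x) := by
      simp only [hgdef2]; abel
    rw [heq]
    exact hmmf x n
  -- choice of scales
  have hq : ∀ n, ∃ m, n + 1 ≤ m ∧ ∀ h1 ∈ Hk m, ∀ h2 ∈ Hk m, h1 + h2 ∈ Hk n := by
    intro n
    have hcont : Continuous (fun q : H × H => q.1 + q.2) := continuous_add
    have h0 : (fun q : H × H => q.1 + q.2) ⁻¹' Hk n ∈ nhds ((0 : H), (0 : H)) := by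
      have ht := hcont.tendsto ((0 : H), (0 : H))
      rw [show (0 : H) + (0 : H) = 0 by abel] at ht
      exact ht (hHknhds n)
    rw [mem_nhds_prod_iff] at h0
    obtain ⟨U1, hU1, U2, hU2, hsub⟩ := h0
    obtain ⟨m₀, hm₀⟩ := hHkbasis (U1 ∩ U2) (Filter.inter_mem hU1 hU2)
    refine ⟨max m₀ (n + 1), le_max_right _ _, ?_⟩
    intro h1 hh1 h2 hh2
    have hs1 : h1 ∈ U1 := (hm₀ (hHkmono (le_max_left _ _) hh1)).1
    have hs2 : h2 ∈ U2 := (hm₀ (hHkmono (le_max_left _ _) hh2)).2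
    exact hsub (⟨hs1, hs2⟩ : (h1, h2) ∈ U1 ×ˢ U2)
  choose qf hqf1 hqf2 using hq
  set jf : ℕ → ℕ := fun n => Nat.rec 0 (fun n jn => max (jn + 1) (qf (n + 1))) n with hjfdef
  have hjfsucc : ∀ n, jf (n + 1) = max (jf n + 1) (qf (n + 1)) := fun n => rfl
  have hjflt : ∀ n, jf n < jf (n + 1) := by
    intro n
    rw [hjfsucc n]
    exact lt_of_lt_of_le (Nat.lt_succ_self _) (le_max_left _ _)
  have hjfmono : ∀ {i j : ℕ}, i ≤ j → jf i ≤ jf j := by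
    intro i j hij
    induction j with
    | zero => rw [Nat.le_zero.1 hij]
    | succ j ih =>
      rcases Nat.le_succ_iff.1 hij with h | h
      · exact le_trans (ih h) (le_of_lt (hjflt j))
      · rw [h]
  have hjfge : ∀ n, n ≤ jf n := by
    intro n
    induction n with
    | zero => exact le_refl _
    | succ n ih => exact lt_of_le_of_lt ih (hjflt n)
  have hjfq : ∀ n, qf (n + 1) ≤ jf (n + 1) := by
    intro n
    rw [hjfsucc n]
    exact le_max_right _ _
  set Gks : ℕ → AddSubgroup G := fun n => Vs (jf n) with hGksdef
  -- value bound
  have hgHk : ∀ n, ∀ x ∈ Gks n, g x ∈ Hk n := by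
    intro n x hx
    have hval := (hGoodk (jf n)).2.2.2.2.2
    obtain ⟨m, hmMk, hmH⟩ := hval x hx
    have h2 : g x - fs (jf n) x + m ∈ Mk (jf n) := (Mk (jf n)).add_mem (hgt x (jf n)) hmMk
    have h3 : g x - fs (jf n) x + m ∈ Hk (jf n) := hMkHk _ h2
    have heq : g x = (fs (jf n) x - m) + (g x - fs (jf n) x + m) := by abel
    rw [heq]
    rcases n with - | n'
    · rw [hHk0]; exact Set.mem_univ _
    · refine hHkmono (Nat.le_of_succ_le_succ (Nat.succ_le_succ (Nat.le_refl _))) ?_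
      have hsum := hqf2 (n' + 1) _ (hHkmono (hjfq n') hmH) _ (hHkmono (hjfq n') h3)
      exact hsum
  -- continuity
  have hcontg : Continuous g := by
    rw [continuous_iff_continuousAt]
    intro x₀
    intro U hU
    rw [Filter.mem_map]
    have htrans : (fun h : H => g x₀ + h) ⁻¹' U ∈ nhds (0 : H) := by
      have hct : Continuous (fun h : H => g x₀ + h) := continuous_const.add continuous_id
      have ht := hct.tendsto (0 : H)
      rw [add_zero] at ht
      exact ht hU
    obtain ⟨n, hn⟩ := hHkbasis _ htrans
    set m := jf (n + 1) with hmdef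
    have hnbhd : {y : G | y - x₀ ∈ Vs m} ∈ nhds x₀ := by
      have hop : IsOpen {y : G | y - x₀ ∈ Vs m} :=
        ((hGoodk m).1).preimage (continuous_id.sub continuous_const)
      refine hop.mem_nhds ?_
      simp only [Set.mem_setOf_eq, sub_self]
      exact (Vs m).zero_mem
    refine Filter.mem_of_superset hnbhd ?_
    intro y hy
    set v : G := y - x₀ with hvdef
    have hvV : v ∈ Vs m := hy
    have hyx : x₀ + v = y := by simp only [hvdef]; abel
    -- decompose g y - g x₀
    obtain ⟨mv, hmvMk, hmvH⟩ := (hGoodk m).2.2.2.2.2 v hvV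
    have hA : (g (x₀ + v) - fs m (x₀ + v)) - (g x₀ - fs m x₀) +
        (fs m (x₀ + v) - fs m x₀ - fs m v) + mv ∈ Mk m := by
      refine (Mk m).add_mem (((Mk m).add_mem ((Mk m).sub_mem (hgt _ m) (hgt _ m)) ?_)) hmvMk
      exact (hGoodk m).2.2.2.2.1 x₀ v hvV
    have hdiff : g (x₀ + v) - g x₀ =
        ((g (x₀ + v) - fs m (x₀ + v)) - (g x₀ - fs m x₀) +
          (fs m (x₀ + v) - fs m x₀ - fs m v) + mv) + (fs m v - mv) := by abel
    have hmem : g (x₀ + v) - g x₀ ∈ Hk n := by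
      rw [hdiff]
      refine hHkdec n ?_
      exact hqf2 (n + 1) _ (hHkmono (hjfq n) (hMkHk _ hA)) _ (hHkmono (hjfq n) hmvH)
    show y ∈ g ⁻¹' U
    have := hn hmem
    simp only [Set.mem_preimage] at this ⊢
    rwa [hyx, show g x₀ + (g y - g x₀) = g y by abel] at this
  -- conclusion
  refine ⟨Gks, g, ?_, ?_, ?_, ?_, hcontg, ?_, ?_, hgHk⟩
  · show Vs (jf 0) = ⊤
    have h0 : jf 0 = 0 := rfl
    rw [h0, hchain0.1]
  · intro k
    exact hVsmono (hjfmono (Nat.le_succ k))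
  · intro k
    exact ((hGoodk (jf k)).1).mem_nhds (Vs (jf k)).zero_mem
  · intro U hU
    obtain ⟨i, -, hi⟩ := hU0.1.mem_iff.1 hU
    refine ⟨i + 1, ?_⟩
    intro x hx
    have h1 : x ∈ Vs (i + 1) := hVsmono (hjfge (i + 1)) hx
    have h2 : x ∈ U0 (i + 1) := (hlink i).2.1 h1
    exact hi (hU0.2 (Nat.le_succ i) h2)
  · intro x
    have h1 : g x - fs 0 x ∈ M := by
      have := hgt x 0
      rw [hMk0] at this
      exact this
    have heq : g x - F x = (g x - fs 0 x) - F 0 := by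
      rw [hchain0.2]
      simp only [hF0def]
      abel
    rw [heq]
    exact M.sub_mem h1 hF0mem
  · intro k x hx y hy
    have hD : fs (jf k) (x + y) - fs (jf k) x - fs (jf k) y ∈ Mk (jf k) :=
      (hGoodk (jf k)).2.2.2.2.1 x y hy
    have heq : g (x + y) - g x - g y =
        (fs (jf k) (x + y) - fs (jf k) x - fs (jf k) y) +
        ((g (x + y) - fs (jf k) (x + y)) - (g x - fs (jf k) x) - (g y - fs (jf k) y)) := by
      abel
    rw [heq]
    refine hMkmono (hjfge k) ?_
    exact (Mk (jf k)).add_mem hD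
      ((Mk (jf k)).sub_mem ((Mk (jf k)).sub_mem (hgt _ _) (hgt _ _)) (hgt _ _))
end

section
/- Let K be a Polish topological field (in particular, any separable complete non-Archimedean valued field), let X be a Polish topological K-vector space, and let N ⊆ X be a K-linear subspace equipped with a Polish topological K-vector space topology τ whose open sets are Borel in X and which refines the subspace topology (so N is a Polishable subspace of X). Define s₁ = ⋂_V ⋃_{w∈N} cl_X(w + V), where V ranges over the τ-neighborhoods of 0 in N and cl_X denotes closure in X. Then s₁ is a K-linear subspace of X: for every λ ∈ K and x ∈ s₁ one has λ·x ∈ s₁. -/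
/-- The first Solecki subgroup `s₁` of a vector space with a Polish cover `X/N` is closed under
scalar multiplication, and hence is a linear subspace. -/
theorem statement18
    {K X : Type*}
    [Field K] [TopologicalSpace K] [IsTopologicalRing K] [PolishSpace K]
    [AddCommGroup X] [Module K X] [TopologicalSpace X] [IsTopologicalAddGroup X]
    [ContinuousSMul K X] [PolishSpace X]
    [MeasurableSpace X] [BorelSpace X]
    -- `N` is a Polishable subspace of `X`, with Polish vector space topology `τ` refining the
    -- subspace topology and whose open sets are Borel in `X`:
    (N : Submodule K X) (τ : TopologicalSpace N)
    (hPol : @PolishSpace N τ) (hTG : @IsTopologicalAddGroup N τ _)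
    (hSMul : @ContinuousSMul K N _ _ τ)
    (hBorel : ∀ U : Set N, τ.IsOpen U → MeasurableSet (Subtype.val '' U))
    (hfiner : τ ≤ instTopologicalSpaceSubtype)
    (lam : K) (x : X)
    (hx : x ∈ ⋂ V ∈ {V : Set N | V ∈ @nhds N τ 0},
      ⋃ w : N, closure ((fun v : N => (w : X) + (v : X)) '' V)) :
    lam • x ∈ ⋂ V ∈ {V : Set N | V ∈ @nhds N τ 0},
      ⋃ w : N, closure ((fun v : N => (w : X) + (v : X)) '' V) := by
  letI := τ
  haveI := hSMul
  simp only [Set.mem_iInter, Set.mem_iUnion, Set.mem_setOf_eq] at hx ⊢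
  intro V hV
  -- pull back V under multiplication by `lam` in (N, τ)
  have hcont : Continuous (fun v : N => lam • v) := continuous_const_smul lam
  have hW : (fun v : N => lam • v) ⁻¹' V ∈ nhds (0 : N) := by
    have h0 : lam • (0 : N) = 0 := smul_zero lam
    exact hcont.continuousAt.preimage_mem_nhds (by rw [h0]; exact hV)
  obtain ⟨w, hw⟩ := hx _ hW
  refine ⟨lam • w, ?_⟩
  -- multiplication by lam on X is continuous
  have hcX : Continuous (fun y : X => lam • y) := continuous_const.smul continuous_id
  have h1 : lam • x ∈ closure ((fun y : X => lam • y) ''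
      ((fun v : N => (w : X) + (v : X)) '' ((fun v : N => lam • v) ⁻¹' V))) := by
    apply image_closure_subset_closure_image hcX
    exact ⟨x, hw, rfl⟩
  refine closure_mono ?_ h1
  rintro _ ⟨_, ⟨v, hv, rfl⟩, rfl⟩
  exact ⟨lam • v, hv, by simp [smul_add]⟩
end

section
/- Let K be a separable complete non-Archimedean nontrivially valued field in which 2 ≠ 0, that is, a field with an absolute value |·| : K → [0,∞) satisfying |λμ| = |λ||μ|, |λ+μ| ≤ max(|λ|,|μ|), |λ| = 0 iff λ = 0, admitting some π with 0 < |π| < 1, complete and separable in the induced metric, and with |2| > 0. Let 𝒪 = {λ ∈ K : |λ| ≤ 1} be its valuation ring. Let X be a separable Fréchet space over K (a Polish topological K-vector space with a countable neighborhood basis of 0 consisting of 𝒪-submodules), let Ŷ be a Polish topological K-vector space, and let M ⊆ Ŷ be a K-linear subspace carrying a separable Fréchet space topology whose open sets are Borel in Ŷ. Let g : X → Ŷ be a continuous function such that g(−z) = −g(z) for all z ∈ X and g(λx + μy) − λg(x) − μg(y) ∈ M for all x, y ∈ X and λ, μ ∈ K (so g is a lift of a K-linear map X → Ŷ/M). Let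 M₁ be an 𝒪-submodule of M that is a neighborhood of 0 in the Fréchet topology of M and satisfies M₁ = cl_Ŷ(M₁) ∩ M, and let X₁ be an 𝒪-submodule of X that is a neighborhood of 0 in X such that g(x+y) − g(x) − g(y) ∈ M₁ for all x, y ∈ X₁. Then there exists an 𝒪-submodule X₁′ of X which is a neighborhood of 0 in X such that g(λx) − λg(x) ∈ M₁ for every x ∈ X₁′ and every λ ∈ 𝒪. -/
open Topology Filter Set

lemma my_aux_open {G : Type*} [AddCommGroup G] [TopologicalSpace G] [IsTopologicalAddGroup G]
    {S : Set G} (h0 : S ∈ nhds (0 : G)) (hadd : ∀ x ∈ S, ∀ y ∈ S, x + y ∈ S) : IsOpen S := by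
  rw [isOpen_iff_mem_nhds]
  intro x hx
  rw [← map_add_left_nhds_zero x, Filter.mem_map]
  exact Filter.mem_of_superset h0 fun u hu => hadd x hx u hu

lemma my_aux_nonmeagre {G : Type*} [TopologicalSpace G] [BaireSpace G] {S : Set G}
    (hS : IsOpen S) (hne : S.Nonempty) : ¬ IsMeagre S := fun h => by
  obtain ⟨x, hxc, hxS⟩ := (dense_of_mem_residual h).exists_mem_open hS hne
  exact hxc hxS

lemma my_pettis {G : Type*} [AddCommGroup G] [TopologicalSpace G] [IsTopologicalAddGroup G]
    [BaireSpace G] {B : Set G} (hB : BaireMeasurableSet B) (hnm : ¬ IsMeagre B) :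
    {t : G | ∃ b₁ ∈ B, ∃ b₂ ∈ B, b₁ - b₂ = t} ∈ nhds (0 : G) := by
  obtain ⟨U, hUopen, hBU⟩ := hB.residualEq_isOpen
  have hE : {z : G | z ∈ B ↔ z ∈ U} ∈ residual G := Filter.eventuallyEq_set.mp hBU
  have hUne : U.Nonempty := by
    rcases U.eq_empty_or_nonempty with h | h
    · exfalso
      apply hnm
      have hmeag : IsMeagre ({z : G | z ∈ B ↔ z ∈ U}ᶜ) := by
        rw [IsMeagre, compl_compl]; exact hE
      refine IsMeagre.mono (s := {z : G | z ∈ B ↔ z ∈ U}ᶜ) (fun b hb hmem => ?_) hmeag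
      have : b ∈ U := hmem.mp hb
      rw [h] at this
      exact this
    · exact h
  obtain ⟨u₀, hu₀⟩ := hUne
  have hN : (fun t : G => t + u₀) ⁻¹' U ∈ nhds (0 : G) :=
    ((continuous_id.add continuous_const).continuousAt).preimage_mem_nhds
      (hUopen.mem_nhds (by simpa using hu₀))
  apply Filter.mem_of_superset hN
  intro t ht
  have hE' : (fun z : G => z - t) ⁻¹' {z : G | z ∈ B ↔ z ∈ U} ∈ residual G := by
    have htd := tendsto_residual_of_isOpenMap (Homeomorph.subRight t).continuous
      (Homeomorph.subRight t).isOpenMap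
    exact Filter.mem_map.mp (htd hE)
  have hQopen : IsOpen (U ∩ (fun z : G => z - t) ⁻¹' U) :=
    hUopen.inter (hUopen.preimage (continuous_id.sub continuous_const))
  have hQ : (U ∩ (fun z : G => z - t) ⁻¹' U).Nonempty := ⟨t + u₀, ht, by simpa using hu₀⟩
  obtain ⟨z, hz1, hz2⟩ := (dense_of_mem_residual (Filter.inter_mem hE hE')).exists_mem_open
    hQopen hQ
  exact ⟨z, hz1.1.mpr hz2.1, z - t, hz1.2.mpr hz2.2, sub_sub_cancel z t⟩

lemma my_extract_net {Z : Type*} [TopologicalSpace Z] [AddCommGroup Z] [IsTopologicalAddGroup Z]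
    [PolishSpace Z] {W : Set Z} (hW : W ∈ nhds (0 : Z)) :
    ∃ D : Set Z, D.Countable ∧ ∃ V : Set Z, IsOpen V ∧ V ⊆ W ∧ ∀ m : Z, ∃ d ∈ D, m - d ∈ V := by
  obtain ⟨V, hVW, hVopen, hV0⟩ := mem_nhds_iff.mp hW
  obtain ⟨D, hDc, hDd⟩ := TopologicalSpace.exists_countable_dense Z
  refine ⟨D, hDc, V, hVopen, hVW, fun m => ?_⟩
  have hOopen : IsOpen ((fun z : Z => m - z) ⁻¹' V) :=
    hVopen.preimage (continuous_const.sub continuous_id)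
  have hOne : ((fun z : Z => m - z) ⁻¹' V).Nonempty := ⟨m, by simpa using hV0⟩
  obtain ⟨d, hdD, hdV⟩ := hDd.exists_mem_open hOopen hOne
  exact ⟨d, hdD, hdV⟩

/-- For a non-Archimedean valued field `(K, v)` with valuation ring `𝒪 = {a : v a ≤ 1}`, a subset
`S` of a `K`-vector space is an *`𝒪`-submodule* (absolutely convex set) if it contains `0` and is
closed under addition and under multiplication by scalars of absolute value at most `1`. -/
def IsOSubmodule {K : Type*} [Field K] (v : K → ℝ) {E : Type*} [AddCommGroup E] [Module K E]
    (S : Set E) : Prop :=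
  (0 : E) ∈ S ∧ (∀ x ∈ S, ∀ y ∈ S, x + y ∈ S) ∧
    ∀ a : K, v a ≤ 1 → ∀ x ∈ S, a • x ∈ S

/-- Lemma on lifts of linear maps between Fréchet spaces over a separable complete
non-Archimedean valued field `K` with `2 ≠ 0`: a continuous odd lift `g` which is additive modulo
`M₁` on an absolutely convex neighborhood of `0` is, on a possibly smaller absolutely convex
neighborhood of `0`, also `𝒪`-homogeneous modulo `M₁`. -/
theorem statement19
    {K X Y : Type*}
    -- `K` is a separable complete non-Archimedean nontrivially valued field:
    [Field K] [TopologicalSpace K] [IsTopologicalRing K] [PolishSpace K]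
    (v : K → ℝ)
    (hv0 : ∀ a : K, v a = 0 ↔ a = 0)
    (hvmul : ∀ a b : K, v (a * b) = v a * v b)
    (hvadd : ∀ a b : K, v (a + b) ≤ max (v a) (v b))
    (hnontriv : ∃ p : K, 0 < v p ∧ v p < 1)
    -- the topology of `K` is the one induced by the valuation metric:
    (hbasis : ∀ s : Set K, s ∈ nhds (0 : K) ↔ ∃ ε : ℝ, 0 < ε ∧ {a : K | v a < ε} ⊆ s)
    (h2 : (2 : K) ≠ 0) (hv2 : 0 < v 2)
    -- `X` is a separable Fréchet space over `K`:
    [AddCommGroup X] [Module K X] [TopologicalSpace X] [IsTopologicalAddGroup X]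
    [ContinuousSMul K X] [PolishSpace X]
    (hXfrechet : ∃ B : ℕ → Set X, (∀ n, B n ∈ nhds (0 : X)) ∧ (∀ n, IsOSubmodule v (B n)) ∧
      ∀ U ∈ nhds (0 : X), ∃ n, B n ⊆ U)
    -- `Y` is a Polish topological `K`-vector space:
    [AddCommGroup Y] [Module K Y] [TopologicalSpace Y] [IsTopologicalAddGroup Y]
    [ContinuousSMul K Y] [PolishSpace Y]
    [MeasurableSpace Y] [BorelSpace Y]
    -- `M` is a subspace of `Y` carrying a separable Fréchet space topology `τ` whose open sets
    -- are Borel in `Y`: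
    (M : Submodule K Y) (τ : TopologicalSpace M)
    (hPol : @PolishSpace M τ) (hTG : @IsTopologicalAddGroup M τ _)
    (hSMulM : @ContinuousSMul K M _ _ τ)
    (hBorelM : ∀ U : Set M, τ.IsOpen U → MeasurableSet (Subtype.val '' U))
    (hMfrechet : ∃ B : ℕ → Set M, (∀ n, B n ∈ @nhds M τ 0) ∧ (∀ n, IsOSubmodule v (B n)) ∧
      ∀ U ∈ @nhds M τ 0, ∃ n, B n ⊆ U)
    -- `g` is a continuous odd lift of a `K`-linear map `X → Y/M`:
    (g : X → Y) (hg : Continuous g)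
    (hgneg : ∀ z : X, g (-z) = -g z)
    (hglin : ∀ (x y : X) (a b : K), g (a • x + b • y) - a • g x - b • g y ∈ M)
    -- `M₁` is an absolutely convex neighborhood of `0` in `M` with `M₁ = cl_Y(M₁) ∩ M`:
    (M₁ : Set Y) (hM₁M : M₁ ⊆ (M : Set Y)) (hM₁O : IsOSubmodule v M₁)
    (hM₁nhd : {m : M | (m : Y) ∈ M₁} ∈ @nhds M τ 0)
    (hM₁cl : M₁ = closure M₁ ∩ (M : Set Y))
    -- `X₁` is an absolutely convex neighborhood of `0` in `X` on which `g` is additive mod `M₁`: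
    (X₁ : Set X) (hX₁O : IsOSubmodule v X₁) (hX₁nhd : X₁ ∈ nhds (0 : X))
    (hX₁add : ∀ x ∈ X₁, ∀ y ∈ X₁, g (x + y) - g x - g y ∈ M₁) :
    ∃ X₁' : Set X, IsOSubmodule v X₁' ∧ X₁' ∈ nhds (0 : X) ∧
      ∀ x ∈ X₁', ∀ a : K, v a ≤ 1 → g (a • x) - a • g x ∈ M₁ := by
  classical
  obtain ⟨π, hπpos, hπlt⟩ := hnontriv
  -- Elementary facts about the valuation
  have hone : (1 : K) ≠ 0 := one_ne_zero
  have hv1 : v 1 = 1 := by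
    have h := hvmul 1 1
    rw [one_mul] at h
    have h1 : v 1 ≠ 0 := fun h0 => hone ((hv0 1).mp h0)
    exact (mul_left_cancel₀ h1 (by rw [mul_one, ← h])).symm
  have hvneg1 : v (-1) ≤ 1 := by
    have h : v (-1) * v (-1) = 1 := by rw [← hvmul, neg_one_mul, neg_neg, hv1]
    nlinarith [sq_nonneg (v (-1) - 1)]
  have hπ0 : π ≠ 0 := by
    intro h
    rw [h, (hv0 0).mpr rfl] at hπpos
    exact lt_irrefl 0 hπpos
  have hvπk : ∀ k : ℕ, v (π ^ k) = (v π) ^ k := by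
    intro k
    induction k with
    | zero => simpa using hv1
    | succ k ih => rw [pow_succ, pow_succ, hvmul, ih]
  -- basic facts about `g`
  have g0 : g 0 = 0 := by
    have h := hgneg 0
    rw [neg_zero] at h
    have h2s : (2 : K) • g 0 = 0 := by
      rw [two_smul]
      nth_rewrite 2 [h]
      exact add_neg_cancel _
    have he : g 0 = ((2 : K)⁻¹ * 2) • g 0 := by rw [inv_mul_cancel₀ h2, one_smul]
    rw [he, mul_smul, h2s, smul_zero]
  have Fmem : ∀ (a : K) (x : X), g (a • x) - a • g x ∈ M := by
    intro a x
    have h := hglin x 0 a 0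
    simpa [g0] using h
  -- facts about `M₁` and its closure
  have M₁smul := hM₁O.2.2
  have M₁add := hM₁O.2.1
  have M₁neg : ∀ y ∈ M₁, -y ∈ M₁ := by
    intro y hy
    have h := M₁smul (-1) hvneg1 y hy
    rwa [neg_one_smul] at h
  have M₁sub : ∀ y ∈ M₁, ∀ z ∈ M₁, y - z ∈ M₁ := by
    intro y hy z hz
    rw [sub_eq_add_neg]
    exact M₁add y hy _ (M₁neg z hz)
  have Csmul : ∀ a : K, v a ≤ 1 → ∀ y ∈ closure M₁, a • y ∈ closure M₁ := by
    intro a ha y hy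
    have hmap : Set.MapsTo (fun z : Y => a • z) M₁ M₁ := fun z hz => M₁smul a ha z hz
    exact hmap.closure (continuous_const.smul continuous_id) hy
  have Cadd : ∀ y ∈ closure M₁, ∀ z ∈ closure M₁, y + z ∈ closure M₁ := by
    intro y hy z hz
    have h1 : ∀ w ∈ M₁, ∀ u ∈ closure M₁, w + u ∈ closure M₁ := by
      intro w hw
      have hmap : Set.MapsTo (fun u : Y => w + u) M₁ M₁ := fun u hu => M₁add w hw u hu
      exact fun u hu => hmap.closure (continuous_const.add continuous_id) hu
    have h2 : Set.MapsTo (fun w : Y => w + z) M₁ (closure M₁) := fun w hw => h1 w hw z hz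
    have h3 := h2.closure (continuous_id.add continuous_const)
    rw [closure_closure] at h3
    exact h3 hy
  have Cneg : ∀ y ∈ closure M₁, -y ∈ closure M₁ := by
    intro y hy
    have h := Csmul (-1) hvneg1 y hy
    rwa [neg_one_smul] at h
  have Csub : ∀ y ∈ closure M₁, ∀ z ∈ closure M₁, y - z ∈ closure M₁ := by
    intro y hy z hz
    rw [sub_eq_add_neg]
    exact Cadd y hy _ (Cneg z hz)
  have CtoM₁ : ∀ y : Y, y ∈ closure M₁ → y ∈ (M : Set Y) → y ∈ M₁ := by
    intro y h1 h2'
    rw [hM₁cl]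
    exact ⟨h1, h2'⟩
  -- the valuation ring is an open subset of `K`
  have hOnhds : {a : K | v a ≤ 1} ∈ nhds (0 : K) :=
    (hbasis _).mpr ⟨1, one_pos, fun a ha => le_of_lt (show v a < 1 from ha)⟩
  have hOadd : ∀ x ∈ {a : K | v a ≤ 1}, ∀ y ∈ {a : K | v a ≤ 1}, x + y ∈ {a : K | v a ≤ 1} :=
    fun x hx y hy => le_trans (hvadd x y) (max_le hx hy)
  have hOopen : IsOpen {a : K | v a ≤ 1} := my_aux_open hOnhds hOadd
  have hX₁open : IsOpen X₁ := my_aux_open hX₁nhd hX₁O.2.1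
  -- Baire space and Borel structures
  haveI hBK : BaireSpace K := by
    letI := TopologicalSpace.upgradeIsCompletelyMetrizable K
    infer_instance
  haveI hBX : BaireSpace X := by
    letI := TopologicalSpace.upgradeIsCompletelyMetrizable X
    infer_instance
  letI : MeasurableSpace K := borel K
  haveI : BorelSpace K := ⟨rfl⟩
  -- extract a countable net for `(M, τ)` inside `M₁`
  obtain ⟨D, hDc, V, hVopen, hVsub, hVcover⟩ :=
    @my_extract_net (↥M) τ _ hTG hPol _ hM₁nhd
  have hVM₁ : ∀ z : ↥M, z ∈ V → (z : Y) ∈ M₁ := fun z hz => hVsub hz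
  have hVmeas : MeasurableSet (Subtype.val '' V) := hBorelM V hVopen
  haveI hDco : Countable ↥D := hDc.to_subtype
  -- Step 7: for each `x ∈ X₁`, `g (a • x) - a • g x ∈ M₁` for all sufficiently small `a`.
  have step7 : ∀ x ∈ X₁, ∃ ε : ℝ, 0 < ε ∧ ε ≤ 1 ∧
      ∀ a : K, v a < ε → g (a • x) - a • g x ∈ M₁ := by
    intro x hx
    set Bd : ↥D → Set K := fun d =>
      {a : K | v a ≤ 1} ∩
        (fun a : K => g (a • x) - a • g x - ((d : ↥M) : Y)) ⁻¹' (Subtype.val '' V) with hBd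
    have hBdmeas : ∀ d, MeasurableSet (Bd d) := by
      intro d
      apply hOopen.measurableSet.inter
      have hcont : Continuous fun a : K => g (a • x) - a • g x - ((d : ↥M) : Y) :=
        ((hg.comp (continuous_id.smul continuous_const)).sub
          (continuous_id.smul continuous_const)).sub continuous_const
      exact hVmeas.preimage hcont.measurable
    have hBdcover : {a : K | v a ≤ 1} ⊆ ⋃ d : ↥D, Bd d := by
      intro a ha
      obtain ⟨d, hdD, hdV⟩ := hVcover ⟨g (a • x) - a • g x, Fmem a x⟩
      refine Set.mem_iUnion.mpr ⟨⟨d, hdD⟩, ha, ⟨_, hdV, rfl⟩⟩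
    have hex : ∃ d : ↥D, ¬ IsMeagre (Bd d) := by
      by_contra hall
      push_neg at hall
      have hmeag : IsMeagre (⋃ d : ↥D, Bd d) := by
        rw [IsMeagre, Set.compl_iUnion]
        exact countable_iInter_mem.mpr fun d => hall d
      exact my_aux_nonmeagre hOopen ⟨0, by simp [(hv0 0).mpr rfl]⟩ (hmeag.mono hBdcover)
    obtain ⟨d₀, hd₀⟩ := hex
    have hS := my_pettis (hBdmeas d₀).baireMeasurableSet hd₀
    obtain ⟨ε₁, hε₁, hsub⟩ := (hbasis _).mp hS
    refine ⟨min ε₁ 1, lt_min hε₁ one_pos, min_le_right _ _, ?_⟩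
    intro a hva
    have hva1 : v a ≤ 1 := le_of_lt (lt_of_lt_of_le hva (min_le_right _ _))
    obtain ⟨b₁, hb₁, b₂, hb₂, heq⟩ := hsub (lt_of_lt_of_le hva (min_le_left _ _))
    obtain ⟨hb₁O, w₁, hw₁V, hw₁⟩ := hb₁
    obtain ⟨hb₂O, w₂, hw₂V, hw₂⟩ := hb₂
    have hm₁ : g (b₁ • x) - b₁ • g x - ((d₀ : ↥M) : Y) ∈ M₁ := by
      have h := hVM₁ _ hw₁V; rwa [hw₁] at h
    have hm₂ : g (b₂ • x) - b₂ • g x - ((d₀ : ↥M) : Y) ∈ M₁ := by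
      have h := hVM₁ _ hw₂V; rwa [hw₂] at h
    have hb₁eq : b₁ = a + b₂ := by rw [← heq]; ring
    subst hb₁eq
    have hax : a • x ∈ X₁ := hX₁O.2.2 a hva1 x hx
    have hbx : b₂ • x ∈ X₁ := hX₁O.2.2 b₂ (show v b₂ ≤ 1 from hb₂O) x hx
    have hadd := hX₁add _ hax _ hbx
    have keyeq : g (a • x) - a • g x =
        ((g ((a + b₂) • x) - (a + b₂) • g x - ((d₀ : ↥M) : Y)) -
          (g (b₂ • x) - b₂ • g x - ((d₀ : ↥M) : Y))) -
          (g (a • x + b₂ • x) - g (a • x) - g (b₂ • x)) := by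
      rw [add_smul, add_smul]
      abel
    rw [keyeq]
    exact M₁sub _ (M₁sub _ hm₁ _ hm₂) _ hadd
  -- Step 8: a Baire category argument in `X` gives a uniform neighborhood.
  set r : ℝ := v π with hr
  have hr0 : 0 < r := hπpos
  have hr1 : r < 1 := hπlt
  set Dset : ℕ → Set X := fun n =>
    {x : X | ∀ a : K, v a ≤ r ^ n → g (a • x) - a • g x ∈ closure M₁} with hDset
  have hDclosed : ∀ n, IsClosed (Dset n) := by
    intro n
    have hrw : Dset n = ⋂ (a : K), ⋂ (_ : v a ≤ r ^ n),
        (fun x : X => g (a • x) - a • g x) ⁻¹' (closure M₁) := by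
      ext z
      simp [hDset, Set.mem_iInter]
    rw [hrw]
    refine isClosed_iInter fun a => isClosed_iInter fun _ => ?_
    exact isClosed_closure.preimage
      ((hg.comp (continuous_const.smul continuous_id)).sub (continuous_const.smul hg))
  have hcover : X₁ ⊆ ⋃ n, X₁ ∩ Dset n := by
    intro x hx
    obtain ⟨ε, hε, hε1, hP⟩ := step7 x hx
    obtain ⟨n, hn⟩ := exists_pow_lt_of_lt_one hε hr1
    exact Set.mem_iUnion.mpr ⟨n, hx, fun a ha => subset_closure (hP a (lt_of_le_of_lt ha hn))⟩
  obtain ⟨n, hn⟩ : ∃ n, ¬ IsMeagre (X₁ ∩ Dset n) := by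
    by_contra hall
    push_neg at hall
    exact my_aux_nonmeagre hX₁open ⟨0, hX₁O.1⟩ ((isMeagre_iUnion hall).mono hcover)
  have h1 : (interior (closure (X₁ ∩ Dset n))).Nonempty := by
    by_contra he
    apply hn
    rw [isMeagre_iff_countable_union_isNowhereDense]
    refine ⟨{closure (X₁ ∩ Dset n)}, ?_, Set.countable_singleton _, by
      simpa using subset_closure⟩
    intro t ht
    rw [Set.mem_singleton_iff] at ht
    subst ht
    rw [IsNowhereDense, closure_closure]
    exact Set.not_nonempty_iff_eq_empty.mp he
  obtain ⟨y₀, hy₀⟩ := h1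
  have h2 : y₀ ∈ closure X₁ := closure_mono Set.inter_subset_left (interior_subset hy₀)
  obtain ⟨x₀, hx₀i, hx₀X₁⟩ :=
    (mem_closure_iff.mp h2) _ isOpen_interior hy₀
  have hclD : ∀ z : X, z ∈ closure (X₁ ∩ Dset n) → z ∈ Dset n := by
    intro z hz
    have h := closure_mono Set.inter_subset_right hz
    rwa [(hDclosed n).closure_eq] at h
  have hx₀D : x₀ ∈ Dset n := hclD _ (interior_subset hx₀i)
  set O : Set X := interior (closure (X₁ ∩ Dset n)) ∩ X₁ with hO
  have hOsub : O ⊆ X₁ ∩ Dset n := fun z hz => ⟨hz.2, hclD _ (interior_subset hz.1)⟩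
  have hOopen' : IsOpen O := isOpen_interior.inter hX₁open
  have hx₀O : x₀ ∈ O := ⟨hx₀i, hx₀X₁⟩
  have hU₀pre : (fun u : X => x₀ + u) ⁻¹' O ∈ nhds (0 : X) :=
    ((continuous_const.add continuous_id).continuousAt).preimage_mem_nhds
      (hOopen'.mem_nhds (by simpa using hx₀O))
  set U₀ : Set X := (fun u : X => x₀ + u) ⁻¹' O ∩ X₁ with hU₀
  have hU₀nhds : U₀ ∈ nhds (0 : X) := Filter.inter_mem hU₀pre hX₁nhd
  have hKeyU : ∀ u ∈ U₀, ∀ a : K, v a ≤ r ^ n → g (a • u) - a • g u ∈ M₁ := by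
    intro u hu a ha
    have hu1 : u ∈ X₁ := hu.2
    have hxu := hOsub hu.1
    have hva1 : v a ≤ 1 := le_trans ha (pow_le_one₀ (le_of_lt hr0) (le_of_lt hr1))
    have haX : a • x₀ ∈ X₁ := hX₁O.2.2 a hva1 x₀ hx₀X₁
    have haU : a • u ∈ X₁ := hX₁O.2.2 a hva1 u hu1
    have hadd : g (a • x₀ + a • u) - g (a • x₀) - g (a • u) ∈ M₁ := hX₁add _ haX _ haU
    have haddX : g (x₀ + u) - g x₀ - g u ∈ M₁ := hX₁add _ hx₀X₁ _ hu1
    have hDx₀ : g (a • x₀) - a • g x₀ ∈ closure M₁ := hx₀D a ha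
    have hDxu : g (a • (x₀ + u)) - a • g (x₀ + u) ∈ closure M₁ := hxu.2 a ha
    have hC : g (a • u) - a • g u ∈ closure M₁ := by
      have keyeq : g (a • u) - a • g u =
          (g (a • (x₀ + u)) - a • g (x₀ + u)) - (g (a • x₀) - a • g x₀) -
            (g (a • x₀ + a • u) - g (a • x₀) - g (a • u)) +
            a • (g (x₀ + u) - g x₀ - g u) := by
        rw [smul_add a x₀ u, smul_sub, smul_sub]
        abel
      rw [keyeq]
      exact Cadd _ (Csub _ (Csub _ hDxu _ hDx₀) _ (subset_closure hadd)) _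
        (subset_closure (M₁smul a hva1 _ haddX))
    exact CtoM₁ _ hC (Fmem a u)
  obtain ⟨Bb, hBbnhds, hBbO, hBbsub⟩ := hXfrechet
  obtain ⟨m, hm⟩ := hBbsub U₀ hU₀nhds
  have hX₂key : ∀ x ∈ Bb m, ∀ a : K, v a ≤ r ^ n → g (a • x) - a • g x ∈ M₁ :=
    fun x hx a ha => hKeyU x (hm hx) a ha
  -- Step 9: conclusion with `X₁' = π ^ n • (Bb m)`.
  refine ⟨(fun z : X => π ^ n • z) '' (Bb m), ⟨⟨0, (hBbO m).1, smul_zero _⟩, ?_, ?_⟩, ?_, ?_⟩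
  · rintro _ ⟨x, hx, rfl⟩ _ ⟨y, hy, rfl⟩
    exact ⟨x + y, (hBbO m).2.1 x hx y hy, by simp [smul_add]⟩
  · rintro a ha _ ⟨x, hx, rfl⟩
    exact ⟨a • x, (hBbO m).2.2 a ha x hx, by simp [smul_comm (π ^ n) a x]⟩
  · -- neighborhood of zero
    have hne : (π ^ n : K) ≠ 0 := pow_ne_zero n hπ0
    have hmap := (Homeomorph.smulOfNeZero (π ^ n) hne (α := X)).map_nhds_eq (0 : X)
    have himg : (fun z : X => π ^ n • z) '' (Bb m) ∈
        Filter.map (Homeomorph.smulOfNeZero (π ^ n) hne (α := X)) (nhds (0 : X)) :=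
      Filter.image_mem_map (hBbnhds m)
    rw [hmap] at himg
    simpa using himg
  · rintro _ ⟨x, hx, rfl⟩ a ha
    have hb1 : v (a * π ^ n) ≤ r ^ n := by
      rw [hvmul, hvπk]
      calc v a * r ^ n ≤ 1 * r ^ n :=
            mul_le_mul_of_nonneg_right ha (pow_nonneg (le_of_lt hr0) n)
        _ = r ^ n := one_mul _
    have hb2 : v (π ^ n) ≤ r ^ n := le_of_eq (hvπk n)
    have ht1 : g ((a * π ^ n) • x) - (a * π ^ n) • g x ∈ M₁ := hX₂key x hx _ hb1
    have ht2 : g ((π ^ n) • x) - (π ^ n) • g x ∈ M₁ := hX₂key x hx _ hb2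
    have keyeq : g (a • π ^ n • x) - a • g (π ^ n • x) =
        (g ((a * π ^ n) • x) - (a * π ^ n) • g x) -
          a • (g ((π ^ n) • x) - (π ^ n) • g x) := by
      rw [smul_smul, mul_smul a (π ^ n) (g x), smul_sub]
      abel
    rw [keyeq]
    exact M₁sub _ ht1 _ (M₁smul a ha _ ht2)
end
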